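/- arXiv:math/0203150 — 2 statements merged into one kernel-verified Lean document; each statement's English description precedes it below -/
import Mathlib

section
/- Let f ∈ ℂ[x,y] be in normal form with n = deg f > 1, let λ₀ ∈ ℂ, and let D ≥ 1 and β₁,…,β_n, γ₁,…,γ_{n−1} be meromorphic at infinity with deg β_i ≤ D, deg γ_j ≤ D, f(t^D,y) − λ₀ = ∏_{i=1}^{n}(y − β_i(t)) and f'_y(t^D,y) = n∏_{j=1}^{n−1}(y − γ_j(t)). Set Ψ_l(t) := (t^D, γ_l(t)) for l = 1,…,n−1. Then min_{i=1}^{n} ( Σ_{j=1, j≠i}^{n} deg(β_i − β_j) + min_{j=1, j≠i}^{n} deg(β_i − β_j) ) = min_{l=1}^{n−1} deg((f − λ₀) ∘ Ψ_l). -/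
open Polynomial

noncomputable section
open scoped Classical

def MeroInf (φ : ℂ → ℂ) : Prop := MeromorphicAt (fun t => φ t⁻¹) 0

noncomputable def degInf (φ : ℂ → ℂ) : EReal :=
  if h : MeroInf φ then
    WithTop.recTopCoe (⊥ : EReal) (fun z : ℤ => (((-z : ℤ) : ℝ) : EReal)) (meromorphicOrderAt (fun t => φ t⁻¹) 0)
  else ⊥

noncomputable def lojInfOn {E F : Type*} [NormedAddCommGroup E] [NormedAddCommGroup F]
    (f : E → F) (S : Set E) : EReal :=
  sSup (Real.toEReal '' {ν : ℝ | ∃ A B : ℝ, 0 < A ∧ 0 < B ∧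
    ∀ z ∈ S, B < ‖z‖ → A * Real.rpow ‖z‖ ν ≤ ‖f z‖})

def sylvester {R : Type*} [CommRing R] (p q : Polynomial R) (m n : ℕ) :
    Matrix (Fin (n + m)) (Fin (n + m)) R :=
  Matrix.of fun i j =>
    Fin.addCases
      (fun i₁ : Fin n => if (i₁ : ℕ) ≤ (j : ℕ) then p.coeff ((j : ℕ) - i₁) else 0)
      (fun i₂ : Fin m => if (i₂ : ℕ) ≤ (j : ℕ) then q.coeff ((j : ℕ) - i₂) else 0) i

noncomputable def resultant {R : Type*} [CommRing R] (p q : Polynomial R) : R :=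
  (_root_.sylvester p q p.natDegree q.natDegree).det

/-! 2-dimensional machinery, `f : (ℂ[x])[y]` -/

noncomputable def pval (f : Polynomial (Polynomial ℂ)) (x y : ℂ) : ℂ :=
  (f.map (evalRingHom x)).eval y

noncomputable def pderivX (f : Polynomial (Polynomial ℂ)) : Polynomial (Polynomial ℂ) :=
  f.sum fun i a => C (derivative a) * X ^ i

def NormalForm (f : Polynomial (Polynomial ℂ)) : Prop :=
  f.Monic ∧ ∀ i, (f.coeff i).natDegree ≤ f.natDegree - i

noncomputable def pgrad (f : Polynomial (Polynomial ℂ)) (z : ℂ × ℂ) : ℂ × ℂ :=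
  (pval (pderivX f) z.1 z.2, pval (derivative f) z.1 z.2)

def Sy (f : Polynomial (Polynomial ℂ)) : Set (ℂ × ℂ) :=
  {z | pval (derivative f) z.1 z.2 = 0}

def Sfib (f : Polynomial (Polynomial ℂ)) (lam : ℂ) : Set (ℂ × ℂ) :=
  {z | pval f z.1 z.2 = lam}

noncomputable def lojFiber2 (f : Polynomial (Polynomial ℂ)) (lam : ℂ) : EReal :=
  sInf {r : EReal | ∃ φ ψ : ℂ → ℂ, MeroInf φ ∧ MeroInf ψ ∧
    0 < max (degInf φ) (degInf ψ) ∧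
    degInf (fun t => pval f (φ t) (ψ t) - lam) < 0 ∧
    r = max (degInf fun t => pval (pderivX f) (φ t) (ψ t))
          (degInf fun t => pval (derivative f) (φ t) (ψ t)) / max (degInf φ) (degInf ψ)}

noncomputable def Qres (f : Polynomial (Polynomial ℂ)) :
    Polynomial (MvPolynomial (Fin 2) ℂ) :=
  let F : Polynomial (Polynomial (MvPolynomial (Fin 2) ℂ)) :=
    f.map (mapRingHom (MvPolynomial.C))
  _root_.resultant (F - C (C (MvPolynomial.X 0))) (derivative F - C (C (MvPolynomial.X 1)))

noncomputable def Qc (f : Polynomial (Polynomial ℂ)) (i : ℕ) : MvPolynomial (Fin 2) ℂ :=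
  (Qres f).coeff ((Qres f).natDegree - i)

noncomputable def Rres (f : Polynomial (Polynomial ℂ)) : Polynomial (Polynomial ℂ) :=
  let F : Polynomial (Polynomial (Polynomial ℂ)) := f.map (mapRingHom C)
  _root_.resultant (F - C (C X)) (derivative F)

def LambdaSet (f : Polynomial (Polynomial ℂ)) : Set ℂ :=
  {lam | ((Rres f).leadingCoeff).eval lam = 0}

noncomputable def ordAt (P : MvPolynomial (Fin 2) ℂ) (lam0 : ℂ) : EReal :=
  let P' : MvPolynomial (Fin 2) ℂ :=
    MvPolynomial.aeval ![MvPolynomial.C lam0 + MvPolynomial.X 0, MvPolynomial.X 1] P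
  if P' = 0 then ⊤
  else (((sInf {d : ℕ | ∃ m ∈ P'.support, m 0 + m 1 = d} : ℕ) : ℝ) : EReal)

noncomputable def Qu (P : MvPolynomial (Fin 2) ℂ) (lam0 : ℂ) : Polynomial ℂ :=
  MvPolynomial.aeval ![Polynomial.C lam0, Polynomial.X] P

/-! n-dimensional machinery -/

noncomputable def mval {n : ℕ} (f : MvPolynomial (Fin n) ℂ) (z : Fin n → ℂ) : ℂ :=
  MvPolynomial.eval z f

noncomputable def mgrad {n : ℕ} (f : MvPolynomial (Fin n) ℂ) (z : Fin n → ℂ) : Fin n → ℂ :=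
  fun i => MvPolynomial.eval z (MvPolynomial.pderiv i f)

def IsMeroCurve {n : ℕ} (Φ : ℂ → Fin n → ℂ) : Prop := ∀ i, MeroInf fun t => Φ t i

noncomputable def degCurve {n : ℕ} (Φ : ℂ → Fin n → ℂ) : EReal :=
  ⨆ i, degInf fun t => Φ t i

noncomputable def lojFiber {n : ℕ} (f : MvPolynomial (Fin n) ℂ) (lam : ℂ) : EReal :=
  sInf {r : EReal | ∃ Φ : ℂ → Fin n → ℂ, IsMeroCurve Φ ∧ 0 < degCurve Φ ∧
    degInf (fun t => mval f (Φ t) - lam) < 0 ∧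
    r = degCurve (fun t => mgrad f (Φ t)) / degCurve Φ}

noncomputable def lojTilde {n : ℕ} (f : MvPolynomial (Fin n) ℂ) (lam : ℂ) : EReal :=
  ⨆ δ : {d : ℝ // 0 < d}, lojInfOn (mgrad f) (mval f ⁻¹' Metric.ball lam δ.1)

def Kinf {n : ℕ} (f : MvPolynomial (Fin n) ℂ) : Set ℂ :=
  {lam | ¬ ∃ η δ R : ℝ, 0 < η ∧ 0 < δ ∧ 0 < R ∧
    ∀ p : Fin n → ℂ, R < ‖p‖ → ‖mval f p - lam‖ < δ → η < ‖p‖ * ‖mgrad f p‖}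

def KinfTilde {n : ℕ} (f : MvPolynomial (Fin n) ℂ) : Set ℂ :=
  {lam | ¬ ∃ η δ R : ℝ, 0 < η ∧ 0 < δ ∧ 0 < R ∧
    ∀ p : Fin n → ℂ, R < ‖p‖ → ‖mval f p - lam‖ < δ → η < ‖mgrad f p‖}


def MeromorphicAt.order {f : ℂ → ℂ} {x : ℂ} (_ : MeromorphicAt f x) : WithTop ℤ :=
  meromorphicOrderAt f x

lemma MeromorphicAt.order_eq_top_iff {f : ℂ → ℂ} {x : ℂ} (hf : MeromorphicAt f x) :
    hf.order = ⊤ ↔ ∀ᶠ z in nhdsWithin x {x}ᶜ, f z = 0 :=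
  meromorphicOrderAt_eq_top_iff

lemma MeromorphicAt.order_eq_int_iff {f : ℂ → ℂ} {x : ℂ} (hf : MeromorphicAt f x) (n : ℤ) :
    hf.order = n ↔ ∃ g : ℂ → ℂ, AnalyticAt ℂ g x ∧ g x ≠ 0 ∧
      ∀ᶠ z in nhdsWithin x {x}ᶜ, f z = (z - x) ^ n • g z :=
  meromorphicOrderAt_eq_int_iff hf

def AnalyticAt.order {f : ℂ → ℂ} {x : ℂ} (_ : AnalyticAt ℂ f x) : ℕ∞ :=
  analyticOrderAt f x

lemma AnalyticAt.order_eq_top_iff {f : ℂ → ℂ} {x : ℂ} (hf : AnalyticAt ℂ f x) :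
    hf.order = ⊤ ↔ ∀ᶠ z in nhds x, f z = 0 :=
  analyticOrderAt_eq_top

lemma AnalyticAt.order_eq_nat_iff {f : ℂ → ℂ} {x : ℂ} (hf : AnalyticAt ℂ f x) (n : ℕ) :
    hf.order = n ↔ ∃ g : ℂ → ℂ, AnalyticAt ℂ g x ∧ g x ≠ 0 ∧
      ∀ᶠ z in nhds x, f z = (z - x) ^ n • g z :=
  hf.analyticOrderAt_eq_natCast

namespace MeroAux
open Filter


variable {f g : ℂ → ℂ} {x : ℂ}

/-- If `f z = (z-x)^m * g z` near `x` with `g` analytic, then `m ≤ order`. -/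
lemma order_ge_of_rep (hf : MeromorphicAt f x) (m : ℤ) (g : ℂ → ℂ)
    (hg : AnalyticAt ℂ g x) (hev : ∀ᶠ z in nhdsWithin x {x}ᶜ, f z = (z - x) ^ m * g z) :
    (m : WithTop ℤ) ≤ hf.order := by
  rcases eq_or_ne hg.order ⊤ with ho | ho
  · have hz : ∀ᶠ z in nhdsWithin x {x}ᶜ, f z = 0 := by
      have := (hg.order_eq_top_iff.mp ho).filter_mono (nhdsWithin_le_nhds (s := {x}ᶜ))
      filter_upwards [hev, this] with z h1 h2
      rw [h1, h2, mul_zero]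
    rw [hf.order_eq_top_iff.mpr hz]
    exact le_top
  · obtain ⟨k, hk⟩ := WithTop.ne_top_iff_exists.mp ho
    obtain ⟨u, hu, hux, huev⟩ := (hg.order_eq_nat_iff k).mp hk.symm
    have : hf.order = ((m + k : ℤ) : WithTop ℤ) := by
      rw [hf.order_eq_int_iff]
      refine ⟨u, hu, hux, ?_⟩
      filter_upwards [hev, (huev.filter_mono (nhdsWithin_le_nhds (s := {x}ᶜ))),
        self_mem_nhdsWithin] with z h1 h2 hz
      have hzx : z - x ≠ 0 := sub_ne_zero.mpr hz
      rw [h1, h2]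
      simp only [smul_eq_mul]
      rw [zpow_add₀ hzx, zpow_natCast]
      ring
    rw [this]
    exact_mod_cast le_add_of_nonneg_right (by positivity)

lemma order_congr (hf : MeromorphicAt f x) (hg : MeromorphicAt g x)
    (h : ∀ᶠ z in nhdsWithin x {x}ᶜ, f z = g z) : hf.order = hg.order := by
  rcases eq_or_ne hf.order ⊤ with ho | ho
  · rw [ho, eq_comm, hg.order_eq_top_iff]
    have := hf.order_eq_top_iff.mp ho
    filter_upwards [this, h] with z h1 h2; rw [← h2]; exact h1
  · obtain ⟨k, hk⟩ := WithTop.ne_top_iff_exists.mp ho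
    obtain ⟨u, hu, hux, huev⟩ := (hf.order_eq_int_iff k).mp hk.symm
    rw [← hk, eq_comm, hg.order_eq_int_iff]
    refine ⟨u, hu, hux, ?_⟩
    filter_upwards [huev, h] with z h1 h2
    rw [← h2]; exact h1

lemma order_mul (hf : MeromorphicAt f x) (hg : MeromorphicAt g x) :
    (hf.mul hg).order = hf.order + hg.order := by
  rcases eq_or_ne hf.order ⊤ with ho | ho
  · rw [ho, top_add, (hf.mul hg).order_eq_top_iff]
    filter_upwards [hf.order_eq_top_iff.mp ho] with z h1
    show f z * g z = 0
    rw [h1, zero_mul]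
  rcases eq_or_ne hg.order ⊤ with ho2 | ho2
  · rw [ho2, add_top, (hf.mul hg).order_eq_top_iff]
    filter_upwards [hg.order_eq_top_iff.mp ho2] with z h1
    show f z * g z = 0
    rw [h1, mul_zero]
  obtain ⟨m, hm⟩ := WithTop.ne_top_iff_exists.mp ho
  obtain ⟨k, hk⟩ := WithTop.ne_top_iff_exists.mp ho2
  obtain ⟨u, hu, hux, huev⟩ := (hf.order_eq_int_iff m).mp hm.symm
  obtain ⟨v, hv, hvx, hvev⟩ := (hg.order_eq_int_iff k).mp hk.symm
  rw [← hm, ← hk, ← WithTop.coe_add, (hf.mul hg).order_eq_int_iff]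
  refine ⟨fun z => u z * v z, hu.mul hv, mul_ne_zero hux hvx, ?_⟩
  filter_upwards [huev, hvev, self_mem_nhdsWithin] with z h1 h2 hz
  have hzx : (z : ℂ) - x ≠ 0 := sub_ne_zero.mpr hz
  show f z * g z = _
  rw [h1, h2, smul_eq_mul, smul_eq_mul, smul_eq_mul, zpow_add₀ hzx]
  ring

lemma order_neg (hf : MeromorphicAt f x) : hf.neg.order = hf.order := by
  rcases eq_or_ne hf.order ⊤ with ho | ho
  · rw [ho, hf.neg.order_eq_top_iff]
    filter_upwards [hf.order_eq_top_iff.mp ho] with z h1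
    show -(f z) = 0
    rw [h1, neg_zero]
  · obtain ⟨m, hm⟩ := WithTop.ne_top_iff_exists.mp ho
    obtain ⟨u, hu, hux, huev⟩ := (hf.order_eq_int_iff m).mp hm.symm
    rw [← hm, hf.neg.order_eq_int_iff]
    refine ⟨fun z => -u z, hu.neg, neg_ne_zero.mpr hux, ?_⟩
    filter_upwards [huev] with z h1
    show -(f z) = _
    rw [h1]; simp only [smul_eq_mul, smul_neg]; ring

lemma order_add_ge_left (hf : MeromorphicAt f x) (hg : MeromorphicAt g x)
    (hle : hf.order ≤ hg.order) : hf.order ≤ (hf.add hg).order := by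
  rcases eq_or_ne hf.order ⊤ with ho | ho
  · have h2 : hg.order = ⊤ := le_antisymm le_top (ho ▸ hle)
    rw [(hf.add hg).order_eq_top_iff.mpr ?_]
    · exact le_top
    · filter_upwards [hf.order_eq_top_iff.mp ho, hg.order_eq_top_iff.mp h2] with z h1 h2
      show f z + g z = 0
      rw [h1, h2, add_zero]
  obtain ⟨m, hm⟩ := WithTop.ne_top_iff_exists.mp ho
  rcases eq_or_ne hg.order ⊤ with ho2 | ho2
  · have h0 : ∀ᶠ z in nhdsWithin x {x}ᶜ, f z + g z = f z := by
      filter_upwards [hg.order_eq_top_iff.mp ho2] with z h1; rw [h1, add_zero]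
    rw [order_congr (hf.add hg) hf h0]
  obtain ⟨k, hk⟩ := WithTop.ne_top_iff_exists.mp ho2
  obtain ⟨u, hu, hux, huev⟩ := (hf.order_eq_int_iff m).mp hm.symm
  obtain ⟨v, hv, hvx, hvev⟩ := (hg.order_eq_int_iff k).mp hk.symm
  have hmk : m ≤ k := by rw [← hm, ← hk] at hle; exact_mod_cast hle
  rw [← hm]
  apply order_ge_of_rep _ m (fun z => u z + (z - x) ^ (k - m).toNat * v z)
  · exact hu.add ((((analyticAt_id).sub analyticAt_const).pow _).mul hv)
  · filter_upwards [huev, hvev, self_mem_nhdsWithin] with z h1 h2 hz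
    have hzx : (z : ℂ) - x ≠ 0 := sub_ne_zero.mpr hz
    show f z + g z = _
    rw [h1, h2]
    simp only [smul_eq_mul]
    rw [mul_add, ← mul_assoc, ← zpow_natCast ((z:ℂ)-x) (k-m).toNat,
      ← zpow_add₀ hzx, Int.toNat_of_nonneg (by omega), add_sub_cancel]

lemma order_add_comm (hf : MeromorphicAt f x) (hg : MeromorphicAt g x) :
    (hf.add hg).order = (hg.add hf).order := by
  apply order_congr
  filter_upwards with z
  show f z + g z = g z + f z
  ring

lemma min_le_order_add (hf : MeromorphicAt f x) (hg : MeromorphicAt g x) :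
    min hf.order hg.order ≤ (hf.add hg).order := by
  rcases le_total hf.order hg.order with hle | hle
  · exact le_trans (min_le_left _ _) (order_add_ge_left hf hg hle)
  · rw [order_add_comm hf hg]
    exact le_trans (min_le_right _ _) (order_add_ge_left hg hf hle)

/-- Strict dominance: if `order g > order f` then `order (f+g) = order f`. -/
lemma order_add_eq_left (hf : MeromorphicAt f x) (hg : MeromorphicAt g x)
    (hlt : hf.order < hg.order) : (hf.add hg).order = hf.order := by
  refine le_antisymm ?_ (order_add_ge_left hf hg hlt.le)
  by_contra hgt
  push_neg at hgt
  have h1 : hf.order = ((hf.add hg).add hg.neg).order := by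
    apply order_congr
    filter_upwards with z
    show f z = (f z + g z) + (- g z)
    ring
  have h2 : min (hf.add hg).order hg.neg.order ≤ ((hf.add hg).add hg.neg).order :=
    min_le_order_add _ _
  rw [← h1, order_neg hg] at h2
  rcases min_le_iff.mp h2 with h | h
  · exact absurd (le_antisymm hgt.le h) (ne_of_lt hgt)
  · exact absurd h (not_le.mpr hlt)

lemma order_const (c : ℂ) (hc : c ≠ 0) :
    (MeromorphicAt.const c x).order = 0 := by
  have : ((0:ℤ) : WithTop ℤ) = (0 : WithTop ℤ) := rfl
  rw [← this, (MeromorphicAt.const c x).order_eq_int_iff]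
  exact ⟨fun _ => c, analyticAt_const, hc, by filter_upwards with z; simp⟩

lemma order_zero_fun : (MeromorphicAt.const (0:ℂ) x).order = ⊤ := by
  rw [MeromorphicAt.order_eq_top_iff]
  filter_upwards with z
  rfl



variable {f g : ℂ → ℂ} {x : ℂ}


variable {ι : Type*}

lemma mero_sum (s : Finset ι) (F : ι → ℂ → ℂ) (h : ∀ i, MeromorphicAt (F i) x) :
    MeromorphicAt (fun z => ∑ i ∈ s, F i z) x := by
  induction s using Finset.induction_on with
  | empty => simpa using MeromorphicAt.const 0 x
  | @insert a s ha ih =>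
    have : (fun z => ∑ i ∈ insert a s, F i z) = fun z => F a z + ∑ i ∈ s, F i z := by
      funext z; rw [Finset.sum_insert ha]
    rw [this]
    exact (h _).add ih

lemma mero_prod (s : Finset ι) (F : ι → ℂ → ℂ) (h : ∀ i, MeromorphicAt (F i) x) :
    MeromorphicAt (fun z => ∏ i ∈ s, F i z) x := by
  induction s using Finset.induction_on with
  | empty => simpa using MeromorphicAt.const 1 x
  | @insert a s ha ih =>
    have : (fun z => ∏ i ∈ insert a s, F i z) = fun z => F a z * ∏ i ∈ s, F i z := by
      funext z; rw [Finset.prod_insert ha]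
    rw [this]
    exact (h _).mul ih

lemma order_prod (s : Finset ι) (F : ι → ℂ → ℂ) (h : ∀ i, MeromorphicAt (F i) x) :
    (mero_prod s F h).order = ∑ i ∈ s, (h i).order := by
  induction s using Finset.induction_on with
  | empty =>
    rw [Finset.sum_empty]
    rw [order_congr (mero_prod ∅ F h) (MeromorphicAt.const 1 x)
      (by filter_upwards with z; simp), order_const 1 one_ne_zero]
  | @insert a s ha ih =>
    rw [Finset.sum_insert ha, ← ih]
    have he : ∀ᶠ z in nhdsWithin x {x}ᶜ, (fun z => ∏ i ∈ insert a s, F i z) z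
        = F a z * ∏ i ∈ s, F i z := by
      filter_upwards with z; rw [Finset.prod_insert ha]
    rw [order_congr (mero_prod _ F h) ((h a).mul (mero_prod s F h)) he, order_mul]

lemma order_sum_ge (s : Finset ι) (F : ι → ℂ → ℂ) (h : ∀ i, MeromorphicAt (F i) x)
    (b : WithTop ℤ) (hb : ∀ i ∈ s, b ≤ (h i).order) :
    b ≤ (mero_sum s F h).order := by
  induction s using Finset.induction_on with
  | empty =>
    rw [order_congr (mero_sum ∅ F h) (MeromorphicAt.const 0 x)
      (by filter_upwards with z; simp), order_zero_fun]
    exact le_top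
  | @insert a s ha ih =>
    have he : ∀ᶠ z in nhdsWithin x {x}ᶜ, (fun z => ∑ i ∈ insert a s, F i z) z
        = F a z + ∑ i ∈ s, F i z := by
      filter_upwards with z; rw [Finset.sum_insert ha]
    rw [order_congr (mero_sum _ F h) ((h a).add (mero_sum s F h)) he]
    refine le_trans ?_ (min_le_order_add (h a) (mero_sum s F h))
    exact le_min (hb a (Finset.mem_insert_self a s)) (ih fun i hi => hb i (Finset.mem_insert_of_mem hi))

/-- A sum with a unique term of strictly minimal (finite) order has that order. -/
lemma order_sum_dominant (s : Finset ι) (F : ι → ℂ → ℂ) (h : ∀ i, MeromorphicAt (F i) x)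
    (i₀ : ι) (hi₀ : i₀ ∈ s) (m : ℤ) (hm : (h i₀).order = (m : WithTop ℤ))
    (hdom : ∀ i ∈ s, i ≠ i₀ → (m : WithTop ℤ) < (h i).order) :
    (mero_sum s F h).order = (m : WithTop ℤ) := by
  have he : ∀ᶠ z in nhdsWithin x {x}ᶜ, (fun z => ∑ i ∈ s, F i z) z
      = F i₀ z + ∑ i ∈ s.erase i₀, F i z := by
    filter_upwards with z
    rw [← Finset.add_sum_erase s _ hi₀]
  have hlt : (h i₀).order < (mero_sum (s.erase i₀) F h).order := by
    rw [hm]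
    refine lt_of_lt_of_le (show ((m:WithTop ℤ)) < ((m+1 : ℤ) : WithTop ℤ) by
        exact_mod_cast WithTop.coe_lt_coe.mpr (lt_add_one m))
      (order_sum_ge _ F h ((m+1 : ℤ) : WithTop ℤ) ?_)
    intro i hi
    have := hdom i (Finset.mem_of_mem_erase hi) (Finset.ne_of_mem_erase hi)
    rcases eq_or_ne (h i).order ⊤ with ht | ht
    · rw [ht]; exact le_top
    · obtain ⟨k, hk⟩ := WithTop.ne_top_iff_exists.mp ht
      rw [← hk] at this ⊢
      exact_mod_cast (by exact_mod_cast this : m < k)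
  rw [order_congr (mero_sum s F h) ((h i₀).add (mero_sum (s.erase i₀) F h)) he,
    order_add_eq_left _ _ hlt, hm]



variable {ι : Type*}

/-- eval of derivative of ∏ (X - C (c j)). -/
lemma eval_derivative_prod [DecidableEq ι] (s : Finset ι) (c : ι → ℂ) (y : ℂ) :
    eval y (derivative (∏ j ∈ s, (X - C (c j)))) =
      ∑ k ∈ s, ∏ j ∈ s.erase k, (y - c j) := by
  induction s using Finset.induction_on with
  | empty => simp
  | @insert a s ha ih =>
    rw [Finset.prod_insert ha, derivative_mul]
    simp only [derivative_sub, derivative_X, derivative_C, sub_zero, one_mul]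
    rw [eval_add, eval_mul, ih, Finset.sum_insert ha, Finset.erase_insert ha]
    have h2 : ∑ k ∈ s, ∏ j ∈ (insert a s).erase k, (y - c j)
        = ∑ k ∈ s, (y - c a) * ∏ j ∈ s.erase k, (y - c j) := by
      refine Finset.sum_congr rfl fun k hk => ?_
      have : (insert a s).erase k = insert a (s.erase k) := by
        rw [Finset.erase_insert_of_ne]
        rintro rfl; exact ha hk
      rw [this, Finset.prod_insert (fun h => ha (Finset.mem_of_mem_erase h))]
    rw [h2, eval_prod]
    simp only [eval_sub, eval_X, eval_C, Finset.mul_sum]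
    try ring_nf

/-- I1 -/
lemma alg1 {n : ℕ} (c : Fin n → ℂ) (d : Fin (n-1) → ℂ)
    (hstar : derivative (∏ j, (X - C (c j))) = C (n:ℂ) * ∏ l, (X - C (d l)))
    (i : Fin n) :
    ∏ j ∈ Finset.univ.erase i, (c i - c j) = (n:ℂ) * ∏ l, (c i - d l) := by
  have := congrArg (eval (c i)) hstar
  rw [eval_derivative_prod, eval_mul, eval_C, eval_prod] at this
  simp only [eval_sub, eval_X, eval_C] at this
  rw [← this]
  symm
  apply Finset.sum_eq_single i
  · intro k _ hk
    apply Finset.prod_eq_zero (Finset.mem_erase.mpr ⟨hk.symm, Finset.mem_univ i⟩)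
    simp
  · intro h; exact absurd (Finset.mem_univ i) h

/-- I2 -/
lemma alg2 {n : ℕ} (c : Fin n → ℂ) (d : Fin (n-1) → ℂ)
    (hstar : derivative (∏ j, (X - C (c j))) = C (n:ℂ) * ∏ l, (X - C (d l)))
    (l : Fin (n-1)) :
    ∑ k, ∏ j ∈ Finset.univ.erase k, (d l - c j) = 0 := by
  have := congrArg (eval (d l)) hstar
  rw [eval_derivative_prod] at this
  refine this.trans ?_
  rw [eval_mul, eval_prod]
  exact mul_eq_zero_of_right _ (Finset.prod_eq_zero (Finset.mem_univ l) (by simp))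

/-- sum over powersetCard of univ vs erase, when the `i` factor is zero -/
lemma sum_powersetCard_erase {n : ℕ} (i : Fin n) (g : Fin n → ℂ) (hg : g i = 0) (s : ℕ) :
    ∑ B ∈ Finset.powersetCard s (Finset.univ : Finset (Fin n)), ∏ j ∈ B, g j
      = ∑ B ∈ Finset.powersetCard s (Finset.univ.erase i), ∏ j ∈ B, g j := by
  rw [← Finset.sum_filter_add_sum_filter_not (Finset.powersetCard s Finset.univ)
    (fun B => i ∈ B)]
  have h1 : ∑ B ∈ (Finset.powersetCard s (Finset.univ : Finset (Fin n))).filter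
      (fun B => i ∈ B), ∏ j ∈ B, g j = 0 := by
    apply Finset.sum_eq_zero
    intro B hB
    exact Finset.prod_eq_zero (Finset.mem_filter.mp hB).2 hg
  rw [h1, zero_add]
  apply Finset.sum_congr
  · ext B
    simp only [Finset.mem_filter, Finset.mem_powersetCard]
    constructor
    · rintro ⟨⟨hBs, hcard⟩, hiB⟩
      exact ⟨fun j hj => Finset.mem_erase.mpr ⟨fun h => hiB (h ▸ hj), hBs hj⟩, hcard⟩
    · rintro ⟨hBs, hcard⟩
      refine ⟨⟨fun j hj => Finset.mem_univ j, hcard⟩, fun hiB => ?_⟩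
      exact absurd rfl (Finset.mem_erase.mp (hBs hiB)).1
  · intros; rfl

/-- I4 -/
lemma alg4 {n : ℕ} (c : Fin n → ℂ) (d : Fin (n-1) → ℂ)
    (hstar : derivative (∏ j, (X - C (c j))) = C (n:ℂ) * ∏ l, (X - C (d l)))
    (i : Fin n) (s : ℕ) (hs : s ≤ n - 1) (hn : 1 ≤ n) :
    ((n : ℂ) - s) * ∑ B ∈ Finset.powersetCard s (Finset.univ.erase i),
        ∏ j ∈ B, (c j - c i)
      = (n : ℂ) * ∑ C ∈ Finset.powersetCard s (Finset.univ : Finset (Fin (n-1))),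
        ∏ l ∈ C, (d l - c i) := by
  -- shift: compose with (X + C (c i))
  have hq : derivative (X + C (c i) : ℂ[X]) = 1 := by
    rw [derivative_add, derivative_X, derivative_C, add_zero]
  have hshift : derivative (∏ j, (X - C (c j - c i)))
      = C (n:ℂ) * ∏ l, (X - C (d l - c i)) := by
    have h1 : (∏ j, (X - C (c j)) : ℂ[X]).comp (X + C (c i)) = ∏ j, (X - C (c j - c i)) := by
      rw [prod_comp]
      refine Finset.prod_congr rfl fun j _ => ?_
      rw [sub_comp, X_comp, C_comp, C_sub]
      ring
    have h2 : derivative ((∏ j, (X - C (c j)) : ℂ[X]).comp (X + C (c i)))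
        = (derivative (∏ j, (X - C (c j)))).comp (X + C (c i)) := by
      rw [derivative_comp, hq, one_mul]
    rw [h1] at h2
    rw [h2, hstar, mul_comp, C_comp, prod_comp]
    congr 1
    refine Finset.prod_congr rfl fun l _ => ?_
    rw [sub_comp, X_comp, C_comp, C_sub]
    ring
  -- take coeff (n - 1 - s)
  have hcard : (Finset.univ : Finset (Fin n)).card = n := by simp
  have hcard' : (Finset.univ : Finset (Fin (n-1))).card = n - 1 := by simp
  have hco := congrArg (fun p => p.coeff (n - 1 - s)) hshift
  rw [coeff_derivative] at hco
  have hrw : ∀ (m : ℕ) (e : Fin m → ℂ) (k : ℕ), k ≤ m →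
      ((∏ j, (X - C (e j)) : ℂ[X])).coeff k
        = ∑ B ∈ Finset.powersetCard (m - k) (Finset.univ : Finset (Fin m)),
            ∏ j ∈ B, (- e j) := by
    intro m e k hk
    have : (∏ j, (X - C (e j)) : ℂ[X]) = ∏ j, (X + C (- e j)) := by
      refine Finset.prod_congr rfl fun j _ => by rw [map_neg, sub_eq_add_neg]
    rw [this, Finset.prod_X_add_C_coeff _ _ (by simpa using hk)]
    simp
  have hs1 : n - 1 - s + 1 ≤ n := by omega
  have hs2 : n - 1 - s ≤ n - 1 := by omega
  rw [hrw n (fun j => c j - c i) _ hs1, coeff_C_mul,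
    hrw (n-1) (fun l => d l - c i) _ hs2] at hco
  have he1 : n - (n - 1 - s + 1) = s := by omega
  have he2 : n - 1 - (n - 1 - s) = s := by omega
  rw [he1, he2] at hco
  simp only [neg_sub] at hco
  have hcast : ((n - 1 - s : ℕ) : ℂ) + 1 = (n : ℂ) - s := by
    have h1 : (n - 1 - s : ℕ) = n - (s+1) := by omega
    rw [h1, Nat.cast_sub (by omega)]
    push_cast
    ring
  rw [hcast] at hco
  have hS : ∑ B ∈ Finset.powersetCard s (Finset.univ : Finset (Fin n)),
        ∏ j ∈ B, (c i - c j)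
      = (-1:ℂ)^s * ∑ B ∈ Finset.powersetCard s (Finset.univ.erase i),
        ∏ j ∈ B, (c j - c i) := by
    rw [sum_powersetCard_erase i (fun j => c i - c j) (by simp) s, Finset.mul_sum]
    refine Finset.sum_congr rfl fun B hB => ?_
    have hBc : B.card = s := (Finset.mem_powersetCard.mp hB).2
    calc ∏ j ∈ B, (c i - c j) = ∏ j ∈ B, ((-1:ℂ) * (c j - c i)) := by
          refine Finset.prod_congr rfl fun j _ => by ring
    _ = (-1:ℂ)^B.card * ∏ j ∈ B, (c j - c i) := by
          rw [Finset.prod_mul_distrib, Finset.prod_const]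
    _ = _ := by rw [hBc]
  have hT : ∑ C ∈ Finset.powersetCard s (Finset.univ : Finset (Fin (n-1))),
        ∏ l ∈ C, (c i - d l)
      = (-1:ℂ)^s * ∑ C ∈ Finset.powersetCard s (Finset.univ : Finset (Fin (n-1))),
        ∏ l ∈ C, (d l - c i) := by
    rw [Finset.mul_sum]
    refine Finset.sum_congr rfl fun B hB => ?_
    have hBc : B.card = s := (Finset.mem_powersetCard.mp hB).2
    calc ∏ l ∈ B, (c i - d l) = ∏ l ∈ B, ((-1:ℂ) * (d l - c i)) := by
          refine Finset.prod_congr rfl fun j _ => by ring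
    _ = (-1:ℂ)^B.card * ∏ l ∈ B, (d l - c i) := by
          rw [Finset.prod_mul_distrib, Finset.prod_const]
    _ = _ := by rw [hBc]
  rw [hS, hT] at hco
  have hpow : ((-1:ℂ))^s ≠ 0 := pow_ne_zero _ (by norm_num)
  apply mul_left_cancel₀ hpow
  linear_combination hco



variable {f g : ℂ → ℂ}

/-- near-infinity property transfers to the punctured neighborhood of 0 under inversion -/
lemma nearInf_to_nhdsNE {P : ℂ → Prop} {R : ℝ} (h : ∀ t : ℂ, R < ‖t‖ → P t) :
    ∀ᶠ z in nhdsWithin (0:ℂ) {0}ᶜ, P z⁻¹ := by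
  rw [eventually_nhdsWithin_iff, Metric.eventually_nhds_iff]
  refine ⟨(max R 0 + 1)⁻¹, by positivity, ?_⟩
  intro z hz hz0
  have hz0' : z ≠ 0 := by simpa using hz0
  have hpos : 0 < ‖z‖ := norm_pos_iff.mpr hz0'
  have h1 : ‖z‖ < (max R 0 + 1)⁻¹ := by simpa [dist_eq_norm] using hz
  apply h
  rw [norm_inv, inv_eq_one_div, lt_div_iff₀ hpos]
  have h2 : ‖z‖ * (max R 0 + 1) < 1 := by
    have := mul_lt_mul_of_pos_right h1 (show (0:ℝ) < max R 0 + 1 by positivity)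
    rwa [inv_mul_cancel₀ (by positivity)] at this
  nlinarith [le_max_left R 0, norm_nonneg z]

/-- order of constant multiple -/
lemma order_cmul {x : ℂ} (c : ℂ) (hc : c ≠ 0) (hf : MeromorphicAt f x)
    (hcf : MeromorphicAt (fun z => c * f z) x) : hcf.order = hf.order := by
  have h1 : hcf.order = ((MeromorphicAt.const c x).mul hf).order :=
    order_congr _ _ (by filter_upwards with z; rfl)
  rw [h1, order_mul (MeromorphicAt.const c x) hf, order_const c hc, zero_add]

/-- a finite sum in `WithTop ℤ` is ⊤ iff some term is ⊤ -/
lemma sum_eq_top_iff {ι : Type*} (s : Finset ι) (w : ι → WithTop ℤ) :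
    ∑ i ∈ s, w i = ⊤ ↔ ∃ i ∈ s, w i = ⊤ := by
  induction s using Finset.induction_on with
  | empty => simp
  | @insert a s ha ih =>
    rw [Finset.sum_insert ha]
    constructor
    · intro h
      rcases eq_or_ne (w a) ⊤ with h1 | h1
      · exact ⟨a, Finset.mem_insert_self a s, h1⟩
      · have : ∑ i ∈ s, w i = ⊤ := by
          by_contra h2
          exact absurd h (WithTop.add_ne_top.mpr ⟨h1, h2⟩)
        obtain ⟨i, hi, hwi⟩ := ih.mp this
        exact ⟨i, Finset.mem_insert_of_mem hi, hwi⟩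
    · rintro ⟨i, hi, hwi⟩
      rcases Finset.mem_insert.mp hi with rfl | hi
      · rw [hwi, top_add]
      · rw [ih.mpr ⟨i, hi, hwi⟩, add_top]

lemma coe_sum_withTop {ι : Type*} (s : Finset ι) (a : ι → ℤ) :
    ((∑ i ∈ s, a i : ℤ) : WithTop ℤ) = ∑ i ∈ s, ((a i : WithTop ℤ)) := by
  induction s using Finset.induction_on with
  | empty => simp
  | @insert b s hb ih => rw [Finset.sum_insert hb, Finset.sum_insert hb, WithTop.coe_add, ih]

/-- the ★ identity, poly funext extraction -/
lemma star_identity {n : ℕ} (F : Polynomial (Polynomial ℂ)) (lam0 : ℂ) (D : ℕ)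
    (β : Fin n → ℂ → ℂ) (γ : Fin (n-1) → ℂ → ℂ) (t : ℂ)
    (hβt : ∀ y : ℂ, ((F.map (evalRingHom (t ^ D))).eval y) - lam0 = ∏ i, (y - β i t))
    (hγt : ∀ y : ℂ, ((derivative F).map (evalRingHom (t ^ D))).eval y
        = (n : ℂ) * ∏ l, (y - γ l t)) :
    derivative (∏ j, (X - C (β j t))) = C (n:ℂ) * ∏ l, (X - C (γ l t)) := by
  have h1 : F.map (evalRingHom (t ^ D)) = (∏ j, (X - C (β j t))) + C lam0 := by
    apply Polynomial.funext
    intro y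
    rw [eval_add, eval_C, eval_prod]
    simp only [eval_sub, eval_X, eval_C]
    have := hβt y
    linear_combination this
  have h2 : (derivative F).map (evalRingHom (t ^ D)) = C (n:ℂ) * ∏ l, (X - C (γ l t)) := by
    apply Polynomial.funext
    intro y
    rw [eval_mul, eval_C, eval_prod]
    simp only [eval_sub, eval_X, eval_C]
    exact hγt y
  have h3 : derivative (F.map (evalRingHom (t ^ D))) = (derivative F).map (evalRingHom (t ^ D)) :=
    Polynomial.derivative_map F (evalRingHom (t ^ D))
  rw [h1, derivative_add, derivative_C, add_zero] at h3
  rw [h3, h2]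


section Main
variable {n : ℕ} {β : Fin n → ℂ → ℂ} {γ : Fin (n-1) → ℂ → ℂ}
variable (hβm : ∀ i, MeromorphicAt (fun z => β i z⁻¹) (0:ℂ))
variable (hγm : ∀ l, MeromorphicAt (fun z => γ l z⁻¹) (0:ℂ))

/-- order of βᵢ - βⱼ -/
noncomputable def wd (i j : Fin n) : WithTop ℤ :=
  (((hβm i).sub (hβm j) : MeromorphicAt (fun z => β i z⁻¹ - β j z⁻¹) 0)).order

/-- order of γₗ - βᵢ -/
noncomputable def we (l : Fin (n-1)) (i : Fin n) : WithTop ℤ :=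
  (((hγm l).sub (hβm i) : MeromorphicAt (fun z => γ l z⁻¹ - β i z⁻¹) 0)).order

lemma order_BG (i : Fin n) (l : Fin (n-1)) :
    (((hβm i).sub (hγm l) : MeromorphicAt (fun z => β i z⁻¹ - γ l z⁻¹) 0)).order
      = we hβm hγm l i := by
  have h1 := order_congr
    (((hβm i).sub (hγm l) : MeromorphicAt (fun z => β i z⁻¹ - γ l z⁻¹) 0))
    ((((hγm l).sub (hβm i) : MeromorphicAt (fun z => γ l z⁻¹ - β i z⁻¹) 0)).neg)
    (by filter_upwards with z; show β i z⁻¹ - γ l z⁻¹ = -(γ l z⁻¹ - β i z⁻¹); ring)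
  rw [h1, order_neg]
  rfl

lemma wd_symm (i j : Fin n) : wd hβm i j = wd hβm j i := by
  have h1 := order_congr
    (((hβm i).sub (hβm j) : MeromorphicAt (fun z => β i z⁻¹ - β j z⁻¹) 0))
    ((((hβm j).sub (hβm i) : MeromorphicAt (fun z => β j z⁻¹ - β i z⁻¹) 0)).neg)
    (by filter_upwards with z; show β i z⁻¹ - β j z⁻¹ = -(β j z⁻¹ - β i z⁻¹); ring)
  unfold wd
  rw [h1, order_neg]

lemma ultra1 (l : Fin (n-1)) (i j : Fin n) :
    min (we hβm hγm l i) (we hβm hγm l j) ≤ wd hβm i j := by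
  have hneg := (((hγm l).sub (hβm i) : MeromorphicAt (fun z => γ l z⁻¹ - β i z⁻¹) 0)).neg
  have hadd := hneg.add ((hγm l).sub (hβm j) : MeromorphicAt (fun z => γ l z⁻¹ - β j z⁻¹) 0)
  have h1 : (hadd).order = wd hβm i j := by
    apply order_congr
    filter_upwards with z
    show -(γ l z⁻¹ - β i z⁻¹) + (γ l z⁻¹ - β j z⁻¹) = β i z⁻¹ - β j z⁻¹
    ring
  rw [← h1]
  refine le_trans (le_min ?_ ?_)
    (min_le_order_add hneg ((hγm l).sub (hβm j) :
      MeromorphicAt (fun z => γ l z⁻¹ - β j z⁻¹) 0))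
  · rw [order_neg ((hγm l).sub (hβm i) :
      MeromorphicAt (fun z => γ l z⁻¹ - β i z⁻¹) 0)]
    exact min_le_left _ _
  · exact min_le_right _ _

lemma ultra2 (l : Fin (n-1)) (i j : Fin n) :
    min (we hβm hγm l i) (wd hβm i j) ≤ we hβm hγm l j := by
  have hadd := ((hγm l).sub (hβm i) : MeromorphicAt (fun z => γ l z⁻¹ - β i z⁻¹) 0).add
    ((hβm i).sub (hβm j) : MeromorphicAt (fun z => β i z⁻¹ - β j z⁻¹) 0)
  have h1 : (hadd).order = we hβm hγm l j := by
    apply order_congr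
    filter_upwards with z
    show (γ l z⁻¹ - β i z⁻¹) + (β i z⁻¹ - β j z⁻¹) = γ l z⁻¹ - β j z⁻¹
    ring
  rw [← h1]
  exact min_le_order_add ((hγm l).sub (hβm i) :
      MeromorphicAt (fun z => γ l z⁻¹ - β i z⁻¹) 0)
    ((hβm i).sub (hβm j) : MeromorphicAt (fun z => β i z⁻¹ - β j z⁻¹) 0)

lemma H1 (hstar : ∀ᶠ z in nhdsWithin (0:ℂ) {0}ᶜ,
      derivative (∏ j, (X - C (β j z⁻¹))) = C (n:ℂ) * ∏ l, (X - C (γ l z⁻¹)))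
    (hn0 : (n:ℂ) ≠ 0) (i : Fin n) :
    ∑ j ∈ Finset.univ.erase i, wd hβm i j = ∑ l, we hβm hγm l i := by
  have hP := mero_prod (x := (0:ℂ)) (Finset.univ.erase i)
    (fun j => fun z => β i z⁻¹ - β j z⁻¹) (fun j => (hβm i).sub (hβm j))
  have hQ0 := mero_prod (x := (0:ℂ)) Finset.univ
    (fun l => fun z => β i z⁻¹ - γ l z⁻¹) (fun l => (hβm i).sub (hγm l))
  have hQ : MeromorphicAt (fun z => (n:ℂ) * ∏ l, (β i z⁻¹ - γ l z⁻¹)) 0 :=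
    (MeromorphicAt.const _ 0).mul hQ0
  have h1 : hP.order = ∑ j ∈ Finset.univ.erase i, wd hβm i j :=
    order_prod _ _ _
  have h2 : hQ.order = ∑ l, we hβm hγm l i := by
    rw [order_cmul _ hn0 hQ0 hQ, order_prod _ _ (fun l => (hβm i).sub (hγm l))]
    exact Finset.sum_congr rfl fun l _ => order_BG hβm hγm i l
  have h3 : hP.order = hQ.order := by
    apply order_congr
    filter_upwards [hstar] with z hz
    exact alg1 (fun j => β j z⁻¹) (fun l => γ l z⁻¹) hz i
  rw [← h1, h3, h2]

lemma H2 (hstar : ∀ᶠ z in nhdsWithin (0:ℂ) {0}ᶜ,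
      derivative (∏ j, (X - C (β j z⁻¹))) = C (n:ℂ) * ∏ l, (X - C (γ l z⁻¹)))
    (hn0 : (n:ℂ) ≠ 0) (l : Fin (n-1)) (i : Fin n) :
    ∃ j ∈ Finset.univ.erase i, we hβm hγm l i ≤ wd hβm i j := by
  by_contra hcon
  push_neg at hcon
  rcases eq_or_ne (we hβm hγm l i) ⊤ with htop | htop
  · have hsum : ∑ l', we hβm hγm l' i = ⊤ :=
      (sum_eq_top_iff _ _).mpr ⟨l, Finset.mem_univ l, htop⟩
    rw [← H1 hβm hγm hstar hn0 i] at hsum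
    obtain ⟨j, hj, hjt⟩ := (sum_eq_top_iff _ _).mp hsum
    have := hcon j hj
    rw [hjt, htop] at this
    exact absurd this (lt_irrefl ⊤)
  · have hwe : ∀ j ∈ Finset.univ.erase i, we hβm hγm l j = wd hβm i j := by
      intro j hj
      have hlt : wd hβm i j < we hβm hγm l i := hcon j hj
      have hadd := ((hβm i).sub (hβm j) :
          MeromorphicAt (fun z => β i z⁻¹ - β j z⁻¹) 0).add
        ((hγm l).sub (hβm i) : MeromorphicAt (fun z => γ l z⁻¹ - β i z⁻¹) 0)
      have h1 : hadd.order = we hβm hγm l j := by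
        apply order_congr
        filter_upwards with z
        show (β i z⁻¹ - β j z⁻¹) + (γ l z⁻¹ - β i z⁻¹) = γ l z⁻¹ - β j z⁻¹
        ring
      rw [← h1, order_add_eq_left _ _ hlt]
      rfl
    have hfin : ∀ k, we hβm hγm l k ≠ ⊤ := by
      intro k
      rcases eq_or_ne k i with rfl | hk
      · exact htop
      · have hk' : k ∈ Finset.univ.erase i := Finset.mem_erase.mpr ⟨hk, Finset.mem_univ k⟩
        rw [hwe k hk']
        exact ne_top_of_lt (hcon k hk')
    choose a ha using fun k => WithTop.ne_top_iff_exists.mp (hfin k)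
    set Ffun : Fin n → ℂ → ℂ :=
      fun k => fun z => ∏ j ∈ Finset.univ.erase k, (γ l z⁻¹ - β j z⁻¹) with hFdef
    have hF : ∀ k, MeromorphicAt (Ffun k) 0 := fun k =>
      mero_prod _ _ (fun j => (hγm l).sub (hβm j))
    have hordF : ∀ k, (hF k).order = ((∑ j ∈ Finset.univ.erase k, a j : ℤ) : WithTop ℤ) := by
      intro k
      have h0 : (hF k).order = ∑ j ∈ Finset.univ.erase k, we hβm hγm l j :=
        order_prod _ _ _
      rw [h0, coe_sum_withTop]
      exact Finset.sum_congr rfl fun j _ => (ha j).symm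
    have hSm := mero_sum Finset.univ Ffun hF
    have hS0 : hSm.order = ⊤ := by
      have h4 : hSm.order = (MeromorphicAt.const (0:ℂ) (0:ℂ)).order :=
        order_congr hSm (MeromorphicAt.const (0:ℂ) (0:ℂ)) (by
          filter_upwards [hstar] with z hz
          show ∑ k, Ffun k z = 0
          exact alg2 (fun j => β j z⁻¹) (fun l' => γ l' z⁻¹) hz l)
      rw [h4, order_zero_fun]
    have hdom : hSm.order = ((∑ j ∈ Finset.univ.erase i, a j : ℤ) : WithTop ℤ) := by
      apply order_sum_dominant Finset.univ Ffun hF i (Finset.mem_univ i) _ (hordF i)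
      intro k _ hk
      rw [hordF k, WithTop.coe_lt_coe]
      have hk' : k ∈ Finset.univ.erase i := Finset.mem_erase.mpr ⟨hk, Finset.mem_univ k⟩
      have h5 : a k < a i := by
        rw [← WithTop.coe_lt_coe, ha k, ha i]
        rw [hwe k hk']
        exact hcon k hk'
      have e1 : a i + ∑ j ∈ Finset.univ.erase i, a j = ∑ j, a j :=
        Finset.add_sum_erase _ _ (Finset.mem_univ i)
      have e2 : a k + ∑ j ∈ Finset.univ.erase k, a j = ∑ j, a j :=
        Finset.add_sum_erase _ _ (Finset.mem_univ k)
      omega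
    rw [hS0] at hdom
    exact absurd hdom.symm (WithTop.coe_ne_top)

lemma erase_nonempty (hn1 : 1 < n) (i : Fin n) : (Finset.univ.erase i).Nonempty := by
  rw [← Finset.card_pos, Finset.card_erase_of_mem (Finset.mem_univ i), Finset.card_univ,
    Fintype.card_fin]
  omega

lemma H3 (hstar : ∀ᶠ z in nhdsWithin (0:ℂ) {0}ᶜ,
      derivative (∏ j, (X - C (β j z⁻¹))) = C (n:ℂ) * ∏ l, (X - C (γ l z⁻¹)))
    (hn1 : 1 < n) (i : Fin n) :
    ∃ l, (Finset.univ.erase i).sup' (erase_nonempty hn1 i) (wd hβm i) ≤ we hβm hγm l i := by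
  have hn0 : (n:ℂ) ≠ 0 := Nat.cast_ne_zero.mpr (by omega)
  obtain ⟨j₀, hj₀mem, hj₀⟩ :=
    Finset.exists_mem_eq_sup' (erase_nonempty hn1 i) (wd hβm i)
  set M := (Finset.univ.erase i).sup' (erase_nonempty hn1 i) (wd hβm i) with hM
  rcases eq_or_ne M ⊤ with htop | htop
  · have hsum : ∑ j ∈ Finset.univ.erase i, wd hβm i j = ⊤ :=
      (sum_eq_top_iff _ _).mpr ⟨j₀, hj₀mem, by rw [← hj₀, ← htop]⟩
    rw [H1 hβm hγm hstar hn0 i] at hsum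
    obtain ⟨l, _, hl⟩ := (sum_eq_top_iff _ _).mp hsum
    exact ⟨l, by rw [hl]; exact le_top⟩
  · obtain ⟨m, hmM⟩ := WithTop.ne_top_iff_exists.mp htop
    by_contra hcon
    push_neg at hcon
    have hfinE : ∀ l, we hβm hγm l i ≠ ⊤ := fun l => ne_top_of_lt (hcon l)
    choose a ha using fun l => WithTop.ne_top_iff_exists.mp (hfinE l)
    have haM : ∀ l, a l < m := by
      intro l
      rw [← WithTop.coe_lt_coe, ha l, hmM]
      exact hcon l
    have hdle : ∀ j ∈ Finset.univ.erase i, wd hβm i j ≤ M :=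
      fun j hj => Finset.le_sup' (wd hβm i) hj
    have hfinD : ∀ j ∈ Finset.univ.erase i, wd hβm i j ≠ ⊤ := by
      intro j hj
      have h6 := hdle j hj
      rw [← hmM] at h6
      intro hcontra
      rw [hcontra] at h6
      exact absurd h6 (by simp)
    set b : Fin n → ℤ := fun j => WithTop.untopD 0 (wd hβm i j) with hb
    have hbe : ∀ j ∈ Finset.univ.erase i, (b j : WithTop ℤ) = wd hβm i j := by
      intro j hj
      rcases WithTop.ne_top_iff_exists.mp (hfinD j hj) with ⟨v, hv⟩
      simp only [hb]
      rw [← hv]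
      simp
    have hble : ∀ j ∈ Finset.univ.erase i, b j ≤ m := by
      intro j hj
      rw [← WithTop.coe_le_coe, hbe j hj, hmM]
      exact hdle j hj
    set A := (Finset.univ.erase i).filter (fun j => wd hβm i j < M) with hA
    have hAsub : A ⊆ Finset.univ.erase i := Finset.filter_subset _ _
    set r := A.card with hr
    have hcompl : ∀ j ∈ Finset.univ.erase i, j ∉ A → wd hβm i j = M := by
      intro j hj hjA
      rcases lt_or_eq_of_le (hdle j hj) with h | h
      · exact absurd (Finset.mem_filter.mpr ⟨hj, h⟩) hjA
      · exact h
    have hbcompl : ∀ j ∈ Finset.univ.erase i, j ∉ A → b j = m := by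
      intro j hj hjA
      rw [← WithTop.coe_inj (α := ℤ), hbe j hj, hcompl j hj hjA, hmM]
    have hbA : ∀ j ∈ A, b j < m := by
      intro j hj
      have hj' := Finset.mem_filter.mp hj
      rw [← WithTop.coe_lt_coe, hbe j hj'.1, hmM]
      exact hj'.2
    have hj₀A : j₀ ∉ A := by
      intro hj
      have := (Finset.mem_filter.mp hj).2
      rw [hj₀] at this
      exact absurd this (lt_irrefl _)
    have hcard_erase : (Finset.univ.erase i).card = n - 1 := by
      rw [Finset.card_erase_of_mem (Finset.mem_univ i), Finset.card_univ, Fintype.card_fin]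
    have hrlt : r < n - 1 := by
      have hle : r ≤ n - 1 := by
        rw [hr, ← hcard_erase]
        exact Finset.card_le_card hAsub
      rcases eq_or_lt_of_le hle with h | h
      · exfalso
        have heq : A = Finset.univ.erase i :=
          Finset.eq_of_subset_of_card_le hAsub (by rw [hcard_erase, ← h, hr])
        exact hj₀A (heq ▸ hj₀mem)
      · exact h
    -- H1 in integer form
    have hH1 : ∑ j ∈ Finset.univ.erase i, b j = ∑ l, a l := by
      have h7 := H1 hβm hγm hstar hn0 i
      have h8 : ∑ j ∈ Finset.univ.erase i, wd hβm i j
          = ((∑ j ∈ Finset.univ.erase i, b j : ℤ) : WithTop ℤ) := by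
        rw [coe_sum_withTop]
        exact Finset.sum_congr rfl fun j hj => (hbe j hj).symm
      have h9 : ∑ l, we hβm hγm l i = ((∑ l, a l : ℤ) : WithTop ℤ) := by
        rw [coe_sum_withTop]
        exact Finset.sum_congr rfl fun l _ => (ha l).symm
      rw [h8, h9] at h7
      exact_mod_cast h7
    rcases Nat.eq_zero_or_pos r with hr0 | hrpos
    · -- all wd = M
      have hAe : A = ∅ := Finset.card_eq_zero.mp hr0
      have hball : ∀ j ∈ Finset.univ.erase i, b j = m := by
        intro j hj
        exact hbcompl j hj (by rw [hAe]; exact Finset.notMem_empty j)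
      have hsb : ∑ j ∈ Finset.univ.erase i, b j = (n - 1 : ℕ) * m := by
        rw [Finset.sum_congr rfl hball, Finset.sum_const, hcard_erase, nsmul_eq_mul]
      have hsa : ∑ l, a l < (n - 1 : ℕ) * m := by
        calc ∑ l, a l < ∑ _l : Fin (n-1), m := by
              apply Finset.sum_lt_sum_of_nonempty
              · have hpos : 0 < n - 1 := by omega
                have : Nonempty (Fin (n-1)) := Fin.pos_iff_nonempty.mp hpos
                exact Finset.univ_nonempty
              · exact fun l _ => haM l
        _ = (n - 1 : ℕ) * m := by
              rw [Finset.sum_const, Finset.card_univ, Fintype.card_fin, nsmul_eq_mul]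
      omega
    · -- r ≥ 1 : use the esymm coefficient identity
      have hAmem : A ∈ Finset.powersetCard r (Finset.univ.erase i) :=
        Finset.mem_powersetCard.mpr ⟨hAsub, rfl⟩
      set W := ∑ j ∈ A, b j with hW
      -- Eδ sum
      set Fδ : Finset (Fin n) → ℂ → ℂ :=
        fun B => fun z => ∏ j ∈ B, (β j z⁻¹ - β i z⁻¹) with hFδ
      have hFδm : ∀ B, MeromorphicAt (Fδ B) 0 := fun B =>
        mero_prod _ _ (fun j => (hβm j).sub (hβm i))
      have hordδ : ∀ B ∈ Finset.powersetCard r (Finset.univ.erase i),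
          (hFδm B).order = ((∑ j ∈ B, b j : ℤ) : WithTop ℤ) := by
        intro B hB
        have hBsub := (Finset.mem_powersetCard.mp hB).1
        have h0 : (hFδm B).order = ∑ j ∈ B, wd hβm j i := order_prod _ _ _
        rw [h0, coe_sum_withTop]
        refine Finset.sum_congr rfl fun j hj => ?_
        rw [← wd_symm, ← hbe j (hBsub hj)]
      have hEδ := mero_sum (Finset.powersetCard r (Finset.univ.erase i)) Fδ hFδm
      have hEδord : hEδ.order = ((W : ℤ) : WithTop ℤ) := by
        apply order_sum_dominant _ Fδ hFδm A hAmem W (hordδ A hAmem)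
        intro B hB hBA
        rw [hordδ B hB, WithTop.coe_lt_coe]
        -- W < ∑_{B} b
        have hBsub := (Finset.mem_powersetCard.mp hB).1
        have hBcard : B.card = r := (Finset.mem_powersetCard.mp hB).2
        have hABne : (A \ B).Nonempty := by
          rw [Finset.sdiff_nonempty]
          intro hsub
          exact hBA (Finset.eq_of_subset_of_card_le hsub (by omega)).symm
        have hcards : (A \ B).card = (B \ A).card := by
          have c1 := Finset.card_sdiff_add_card_inter A B
          have c2 := Finset.card_sdiff_add_card_inter B A
          rw [Finset.inter_comm] at c2
          omega
        have hsplit1 : ∑ j ∈ A, b j = ∑ j ∈ A ∩ B, b j + ∑ j ∈ A \ B, b j :=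
          (Finset.sum_inter_add_sum_sdiff A B b).symm
        have hsplit2 : ∑ j ∈ B, b j = ∑ j ∈ B ∩ A, b j + ∑ j ∈ B \ A, b j :=
          (Finset.sum_inter_add_sum_sdiff B A b).symm
        have hinter : ∑ j ∈ A ∩ B, b j = ∑ j ∈ B ∩ A, b j := by rw [Finset.inter_comm]
        have hBA_eq : ∑ j ∈ B \ A, b j = (B \ A).card * m := by
          rw [Finset.sum_congr rfl (fun j hj => ?_), Finset.sum_const, nsmul_eq_mul]
          have hj' := Finset.mem_sdiff.mp hj
          exact hbcompl j (hBsub hj'.1) hj'.2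
        have hAB_lt : ∑ j ∈ A \ B, b j < (A \ B).card * m := by
          calc ∑ j ∈ A \ B, b j < ∑ _j ∈ A \ B, m := by
                apply Finset.sum_lt_sum_of_nonempty hABne
                intro j hj
                exact hbA j (Finset.mem_sdiff.mp hj).1
          _ = (A \ B).card * m := by rw [Finset.sum_const, nsmul_eq_mul]
        have hcards' : (((A \ B).card : ℕ) : ℤ) * m = (((B \ A).card : ℕ) : ℤ) * m := by
          rw [hcards]
        rw [hW]
        linarith [hsplit1, hsplit2, hinter, hBA_eq, hAB_lt, hcards']
      -- Eε sum
      set Fε : Finset (Fin (n-1)) → ℂ → ℂ :=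
        fun Cs => fun z => ∏ l ∈ Cs, (γ l z⁻¹ - β i z⁻¹) with hFε
      have hFεm : ∀ Cs, MeromorphicAt (Fε Cs) 0 := fun Cs =>
        mero_prod _ _ (fun l => (hγm l).sub (hβm i))
      have hordε : ∀ Cs, (hFεm Cs).order = ((∑ l ∈ Cs, a l : ℤ) : WithTop ℤ) := by
        intro Cs
        have h0 : (hFεm Cs).order = ∑ l ∈ Cs, we hβm hγm l i := order_prod _ _ _
        rw [h0, coe_sum_withTop]
        exact Finset.sum_congr rfl fun l _ => (ha l).symm
      have hEε := mero_sum (Finset.powersetCard r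
        (Finset.univ : Finset (Fin (n-1)))) Fε hFεm
      -- order equality via alg4
      have hcast : ((n:ℂ) - r) ≠ 0 := by
        have : ((n:ℂ) - r) = ((n - r : ℕ) : ℂ) := by
          rw [Nat.cast_sub (by omega)]
        rw [this]
        exact Nat.cast_ne_zero.mpr (by omega)
      have hδscaled : MeromorphicAt (fun z => ((n:ℂ) - r) *
          ∑ B ∈ Finset.powersetCard r (Finset.univ.erase i), Fδ B z) 0 :=
        (MeromorphicAt.const _ 0).mul hEδ
      have hεscaled : MeromorphicAt (fun z => (n:ℂ) *
          ∑ Cs ∈ Finset.powersetCard r (Finset.univ : Finset (Fin (n-1))), Fε Cs z) 0 :=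
        (MeromorphicAt.const _ 0).mul hEε
      have hordeq : hEδ.order = hEε.order := by
        have g1 : hδscaled.order = hEδ.order := order_cmul _ hcast hEδ hδscaled
        have g2 : hεscaled.order = hEε.order := order_cmul _ hn0 hEε hεscaled
        have g3 : hδscaled.order = hεscaled.order := by
          apply order_congr
          filter_upwards [hstar] with z hz
          exact alg4 (fun j => β j z⁻¹) (fun l => γ l z⁻¹) hz i r (by omega) (by omega)
        rw [← g1, g3, g2]
      -- lower bound for Eε order
      have hpne : (Finset.powersetCard r (Finset.univ : Finset (Fin (n-1)))).Nonempty := by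
        apply Finset.powersetCard_nonempty.mpr
        rw [Finset.card_univ, Fintype.card_fin]
        omega
      obtain ⟨C₀, hC₀mem, hC₀min⟩ := Finset.exists_min_image _
        (fun Cs => ∑ l ∈ Cs, a l) hpne
      have hlow : ((∑ l ∈ C₀, a l : ℤ) : WithTop ℤ) ≤ hEε.order := by
        apply order_sum_ge
        intro Cs hCs
        rw [hordε Cs, WithTop.coe_le_coe]
        exact hC₀min Cs hCs
      have hWge : ∑ l ∈ C₀, a l ≤ W := by
        rw [← (WithTop.coe_le_coe : ((∑ l ∈ C₀, a l : ℤ) : WithTop ℤ) ≤ (W : WithTop ℤ) ↔ _)]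
        rw [← hEδord, hordeq]
        exact hlow
      -- combine with H1
      have hC₀sub : C₀ ⊆ Finset.univ := Finset.subset_univ _
      have hC₀card : C₀.card = r := (Finset.mem_powersetCard.mp hC₀mem).2
      have hsplitD : ∑ j ∈ Finset.univ.erase i, b j
          = ∑ j ∈ Finset.univ.erase i \ A, b j + ∑ j ∈ A, b j :=
        (Finset.sum_sdiff hAsub).symm
      have hDcompl : ∑ j ∈ Finset.univ.erase i \ A, b j = ((n - 1 - r : ℕ) : ℤ) * m := by
        have hcongr : ∑ j ∈ Finset.univ.erase i \ A, b j
            = ∑ _j ∈ Finset.univ.erase i \ A, m := by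
          refine Finset.sum_congr rfl fun j hj => ?_
          have hj' := Finset.mem_sdiff.mp hj
          exact hbcompl j hj'.1 hj'.2
        rw [hcongr, Finset.sum_const, nsmul_eq_mul, Finset.card_sdiff_of_subset hAsub, hcard_erase]
      have hsplitE : ∑ l, a l = ∑ l ∈ Finset.univ \ C₀, a l + ∑ l ∈ C₀, a l :=
        (Finset.sum_sdiff hC₀sub).symm
      have hEcompl : ∑ l ∈ Finset.univ \ C₀, a l < ((n - 1 - r : ℕ) : ℤ) * m := by
        have hcardc : (Finset.univ \ C₀).card = n - 1 - r := by
          rw [Finset.card_sdiff_of_subset hC₀sub, Finset.card_univ, Fintype.card_fin, hC₀card]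
        calc ∑ l ∈ Finset.univ \ C₀, a l < ∑ _l ∈ Finset.univ \ C₀, m := by
              apply Finset.sum_lt_sum_of_nonempty
              · rw [← Finset.card_pos, hcardc]; omega
              · exact fun l _ => haM l
        _ = ((n - 1 - r : ℕ) : ℤ) * m := by rw [Finset.sum_const, nsmul_eq_mul, hcardc]
      linarith [hH1, hWge, hsplitD, hDcompl, hsplitE, hEcompl]

end Main

section Kernel

lemma kernel {n : ℕ}
    (d : Fin n → Fin n → WithTop ℤ) (e : Fin (n-1) → Fin n → WithTop ℤ)
    (hne : ∀ i : Fin n, (Finset.univ.erase i).Nonempty)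
    (hu : (Finset.univ : Finset (Fin n)).Nonempty)
    (hv : (Finset.univ : Finset (Fin (n-1))).Nonempty)
    (hultra1 : ∀ l i j, min (e l i) (e l j) ≤ d i j)
    (hultra2 : ∀ l i j, min (e l i) (d i j) ≤ e l j)
    (hH2 : ∀ l i, (∀ k, e l k ≤ e l i) → ∃ j ∈ Finset.univ.erase i, e l i ≤ d i j)
    (hH3 : ∀ i, ∃ l, (Finset.univ.erase i).sup' (hne i) (d i) ≤ e l i) :
    Finset.univ.sup' hu (fun i => (∑ j ∈ Finset.univ.erase i, d i j)
        + (Finset.univ.erase i).sup' (hne i) (d i))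
      = Finset.univ.sup' hv (fun l => ∑ k, e l k) := by
  apply le_antisymm
  · rw [Finset.sup'_le_iff]
    intro i _
    obtain ⟨l, hl⟩ := hH3 i
    refine le_trans ?_ (Finset.le_sup' _ (Finset.mem_univ l))
    have h1 : ∀ j ∈ Finset.univ.erase i, d i j ≤ e l j := by
      intro j hj
      refine le_trans (le_min ?_ le_rfl) (hultra2 l i j)
      exact le_trans (Finset.le_sup' (d i) hj) hl
    have h2 : ∑ j ∈ Finset.univ.erase i, d i j ≤ ∑ j ∈ Finset.univ.erase i, e l j :=
      Finset.sum_le_sum h1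
    calc (∑ j ∈ Finset.univ.erase i, d i j) + (Finset.univ.erase i).sup' (hne i) (d i)
        ≤ (∑ j ∈ Finset.univ.erase i, e l j) + e l i := add_le_add h2 hl
      _ = ∑ k, e l k := by
          rw [add_comm, Finset.add_sum_erase _ _ (Finset.mem_univ i)]
  · rw [Finset.sup'_le_iff]
    intro l _
    obtain ⟨i, -, hi⟩ := Finset.exists_mem_eq_sup' hu (e l)
    have hmax : ∀ k, e l k ≤ e l i := by
      intro k
      rw [← hi]
      exact Finset.le_sup' (e l) (Finset.mem_univ k)
    obtain ⟨j₀, hj₀mem, hj₀⟩ := hH2 l i hmax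
    refine le_trans ?_ (Finset.le_sup' _ (Finset.mem_univ i))
    have h1 : ∀ j ∈ Finset.univ.erase i, e l j ≤ d i j := by
      intro j _
      have h := hultra1 l i j
      rwa [min_eq_right (hmax j)] at h
    have h2 : ∑ j ∈ Finset.univ.erase i, e l j ≤ ∑ j ∈ Finset.univ.erase i, d i j :=
      Finset.sum_le_sum h1
    have h3 : e l i ≤ (Finset.univ.erase i).sup' (hne i) (d i) :=
      le_trans hj₀ (Finset.le_sup' (d i) hj₀mem)
    calc ∑ k, e l k = (∑ j ∈ Finset.univ.erase i, e l j) + e l i := by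
          rw [add_comm, Finset.add_sum_erase _ _ (Finset.mem_univ i)]
      _ ≤ _ := add_le_add h2 h3

/-- conversion `order → degree` -/
noncomputable def Ed : WithTop ℤ → EReal :=
  fun o => WithTop.recTopCoe (⊥ : EReal) (fun z : ℤ => (((-z : ℤ) : ℝ) : EReal)) o

lemma Ed_antitone {a b : WithTop ℤ} (h : a ≤ b) : Ed b ≤ Ed a := by
  cases b with
  | top => simp [Ed]
  | coe vb =>
    cases a with
    | top => exact absurd h (by simp)
    | coe va =>
      have h1 : va ≤ vb := by exact_mod_cast h
      show (((-vb:ℤ):ℝ):EReal) ≤ (((-va:ℤ):ℝ):EReal)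
      have h2 : ((-vb:ℤ):ℝ) ≤ ((-va:ℤ):ℝ) := by exact_mod_cast neg_le_neg h1
      exact_mod_cast h2

lemma Ed_add (a b : WithTop ℤ) : Ed (a + b) = Ed a + Ed b := by
  cases a with
  | top =>
    rw [top_add]
    show (⊥ : EReal) = ⊥ + Ed b
    cases b with
    | top => simp
    | coe vb => show (⊥:EReal) = ⊥ + (((-vb:ℤ):ℝ):EReal); simp
  | coe va =>
    cases b with
    | top =>
      rw [add_top]
      show (⊥ : EReal) = (((-va:ℤ):ℝ):EReal) + ⊥
      simp
    | coe vb =>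
      show (((-(va+vb):ℤ):ℝ):EReal) = (((-va:ℤ):ℝ):EReal) + (((-vb:ℤ):ℝ):EReal)
      rw [← EReal.coe_add]
      congr 1
      push_cast
      ring

lemma Ed_sum {ι : Type*} (s : Finset ι) (w : ι → WithTop ℤ) :
    Ed (∑ i ∈ s, w i) = ∑ i ∈ s, Ed (w i) := by
  induction s using Finset.induction_on with
  | empty =>
    simp only [Finset.sum_empty]
    show Ed ((0:ℤ) : WithTop ℤ) = 0
    show (((-(0:ℤ) : ℤ):ℝ):EReal) = 0
    norm_num
  | @insert a s ha ih =>
    rw [Finset.sum_insert ha, Finset.sum_insert ha, Ed_add, ih]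

lemma iInf_Ed {m : ℕ} (w : Fin m → WithTop ℤ) (hu : (Finset.univ : Finset (Fin m)).Nonempty) :
    (⨅ i, Ed (w i)) = Ed (Finset.univ.sup' hu w) := by
  obtain ⟨i₀, -, hi₀⟩ := Finset.exists_mem_eq_sup' hu w
  apply le_antisymm
  · exact iInf_le_of_le i₀ (le_of_eq (by rw [hi₀]))
  · exact le_iInf fun i => Ed_antitone (Finset.le_sup' w (Finset.mem_univ i))

lemma biInf_Ed {m : ℕ} (s : Finset (Fin m)) (hs : s.Nonempty) (w : Fin m → WithTop ℤ) :
    (⨅ j ∈ s, Ed (w j)) = Ed (s.sup' hs w) := by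
  obtain ⟨j₀, hj₀m, hj₀⟩ := Finset.exists_mem_eq_sup' hs w
  apply le_antisymm
  · exact iInf_le_of_le j₀ (iInf_le_of_le hj₀m (le_of_eq (by rw [hj₀])))
  · exact le_iInf fun j => le_iInf fun hj => Ed_antitone (Finset.le_sup' w hj)

end Kernel

end MeroAux

/-- Proposition 2.2. -/
theorem stmt1 (f : Polynomial (Polynomial ℂ)) (hf : NormalForm f)
    (n : ℕ) (hn : n = f.natDegree) (hn1 : 1 < n) (lam0 : ℂ)
    (D : ℕ) (hD : 1 ≤ D) (β : Fin n → ℂ → ℂ) (γ : Fin (n - 1) → ℂ → ℂ)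
    (hβm : ∀ i, MeroInf (β i)) (hγm : ∀ j, MeroInf (γ j))
    (hβd : ∀ i, degInf (β i) ≤ ((D : ℝ) : EReal))
    (hγd : ∀ j, degInf (γ j) ≤ ((D : ℝ) : EReal))
    (hβ : ∃ R : ℝ, 0 < R ∧ ∀ t : ℂ, R < ‖t‖ → ∀ y : ℂ,
      pval f (t ^ D) y - lam0 = ∏ i, (y - β i t))
    (hγ : ∃ R : ℝ, 0 < R ∧ ∀ t : ℂ, R < ‖t‖ → ∀ y : ℂ,
      pval (derivative f) (t ^ D) y = (n : ℂ) * ∏ j, (y - γ j t)) :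
    (⨅ i : Fin n,
        ((∑ j ∈ Finset.univ.erase i, degInf fun t => β i t - β j t) +
          ⨅ j ∈ Finset.univ.erase i, degInf fun t => β i t - β j t)) =
      ⨅ l : Fin (n - 1), degInf fun t => pval f (t ^ D) (γ l t) - lam0 := by
  have hβm' : ∀ i, MeromorphicAt (fun z => β i z⁻¹) (0:ℂ) := hβm
  have hγm' : ∀ l, MeromorphicAt (fun z => γ l z⁻¹) (0:ℂ) := hγm
  obtain ⟨R₁, hR₁pos, hβR⟩ := hβ
  obtain ⟨R₂, hR₂pos, hγR⟩ := hγ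
  have hstar : ∀ᶠ z in nhdsWithin (0:ℂ) {0}ᶜ,
      derivative (∏ j, (X - Polynomial.C (β j z⁻¹)))
        = Polynomial.C (n:ℂ) * ∏ l, (X - Polynomial.C (γ l z⁻¹)) := by
    refine MeroAux.nearInf_to_nhdsNE (R := max R₁ R₂)
      (P := fun t => derivative (∏ j, (X - Polynomial.C (β j t)))
        = Polynomial.C (n:ℂ) * ∏ l, (X - Polynomial.C (γ l t))) ?_
    intro t ht
    exact MeroAux.star_identity f lam0 D β γ t
      (fun y => hβR t (lt_of_le_of_lt (le_max_left _ _) ht) y)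
      (fun y => hγR t (lt_of_le_of_lt (le_max_right _ _) ht) y)
  have hn0 : (n:ℂ) ≠ 0 := Nat.cast_ne_zero.mpr (by omega)
  have hu : (Finset.univ : Finset (Fin n)).Nonempty := ⟨⟨0, by omega⟩, Finset.mem_univ _⟩
  have hv : (Finset.univ : Finset (Fin (n-1))).Nonempty := ⟨⟨0, by omega⟩, Finset.mem_univ _⟩
  have hne : ∀ i : Fin n, (Finset.univ.erase i).Nonempty := MeroAux.erase_nonempty hn1
  -- LHS pieces
  have hLd : ∀ i j, (degInf fun t => β i t - β j t) = MeroAux.Ed (MeroAux.wd hβm' i j) := by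
    intro i j
    have hm : MeroInf (fun t => β i t - β j t) :=
      ((hβm' i).sub (hβm' j) : MeromorphicAt (fun z => β i z⁻¹ - β j z⁻¹) 0)
    rw [degInf, dif_pos hm]
    rfl
  -- RHS pieces
  have hprod : ∀ l, MeromorphicAt (fun z => ∏ i, (γ l z⁻¹ - β i z⁻¹)) (0:ℂ) :=
    fun l => MeroAux.mero_prod _ _ (fun i => (hγm' l).sub (hβm' i))
  have hevl : ∀ l, ∀ᶠ z in nhdsWithin (0:ℂ) {0}ᶜ,
      (∏ i, (γ l z⁻¹ - β i z⁻¹)) = pval f ((z⁻¹) ^ D) (γ l z⁻¹) - lam0 := by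
    intro l
    exact MeroAux.nearInf_to_nhdsNE
      (P := fun t => (∏ i, (γ l t - β i t)) = pval f (t ^ D) (γ l t) - lam0) (R := R₁)
      (fun t ht => (hβR t ht (γ l t)).symm)
  have hTm : ∀ l, MeroInf (fun t => pval f (t ^ D) (γ l t) - lam0) :=
    fun l => (hprod l).congr (hevl l)
  have hTord : ∀ l, (hTm l).order = ∑ i, MeroAux.we hβm' hγm' l i := by
    intro l
    rw [MeroAux.order_congr (hTm l) (hprod l) (Filter.EventuallyEq.symm (hevl l))]
    exact MeroAux.order_prod _ _ _
  have hRd : ∀ l, (degInf fun t => pval f (t ^ D) (γ l t) - lam0)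
      = MeroAux.Ed (∑ i, MeroAux.we hβm' hγm' l i) := by
    intro l
    rw [degInf, dif_pos (hTm l)]
    change MeroAux.Ed (hTm l).order = _
    rw [hTord l]
  have hLHS : ∀ i : Fin n,
      ((∑ j ∈ Finset.univ.erase i, degInf fun t => β i t - β j t) +
        ⨅ j ∈ Finset.univ.erase i, degInf fun t => β i t - β j t)
      = MeroAux.Ed ((∑ j ∈ Finset.univ.erase i, MeroAux.wd hβm' i j)
          + (Finset.univ.erase i).sup' (hne i) (MeroAux.wd hβm' i)) := by
    intro i
    have e1 : (∑ j ∈ Finset.univ.erase i, degInf fun t => β i t - β j t)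
        = MeroAux.Ed (∑ j ∈ Finset.univ.erase i, MeroAux.wd hβm' i j) := by
      rw [MeroAux.Ed_sum]
      exact Finset.sum_congr rfl fun j _ => hLd i j
    have e2 : (⨅ j ∈ Finset.univ.erase i, degInf fun t => β i t - β j t)
        = MeroAux.Ed ((Finset.univ.erase i).sup' (hne i) (MeroAux.wd hβm' i)) := by
      rw [← MeroAux.biInf_Ed _ (hne i) (MeroAux.wd hβm' i)]
      exact iInf_congr fun j => iInf_congr fun hj => hLd i j
    rw [e1, e2, MeroAux.Ed_add]
  have gL : (⨅ i : Fin n,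
      ((∑ j ∈ Finset.univ.erase i, degInf fun t => β i t - β j t) +
        ⨅ j ∈ Finset.univ.erase i, degInf fun t => β i t - β j t))
      = MeroAux.Ed (Finset.univ.sup' hu
          (fun i => (∑ j ∈ Finset.univ.erase i, MeroAux.wd hβm' i j)
            + (Finset.univ.erase i).sup' (hne i) (MeroAux.wd hβm' i))) :=
    (iInf_congr hLHS).trans (MeroAux.iInf_Ed _ hu)
  have gR : (⨅ l : Fin (n-1), degInf fun t => pval f (t ^ D) (γ l t) - lam0)
      = MeroAux.Ed (Finset.univ.sup' hv (fun l => ∑ i, MeroAux.we hβm' hγm' l i)) :=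
    (iInf_congr hRd).trans (MeroAux.iInf_Ed _ hv)
  rw [gL, gR, MeroAux.kernel (MeroAux.wd hβm') (MeroAux.we hβm' hγm') hne hu hv
    (MeroAux.ultra1 hβm' hγm') (MeroAux.ultra2 hβm' hγm')
    (fun l i _ => MeroAux.H2 hβm' hγm' hstar hn0 l i)
    (MeroAux.H3 hβm' hγm' hstar hn1)]

end
end

section
/- Let f : ℂⁿ → ℂ, n ≥ 2, be a non-constant polynomial and λ₀ ∈ ℂ. If λ₀ ∉ K∞(f) and there exists a meromorphic curve Φ in ℂⁿ with deg Φ > 0 such that deg((f−λ₀) ∘ Φ) < 0 and deg(∇f ∘ Φ) = −deg Φ, then 𝓛_{∞,λ₀}(f) = 𝓛̃_{∞,λ₀}(f) = −1. -/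
open Polynomial

noncomputable section
open scoped Classical

section Helpers
open Filter Topology

private lemma ev_inv {P : ℂ → Prop} (h : ∀ᶠ s in 𝓝[≠] (0:ℂ), P s) :
    ∃ R : ℝ, 0 < R ∧ ∀ t : ℂ, R < ‖t‖ → P t⁻¹ := by
  obtain ⟨ε, hε, hball⟩ := Metric.mem_nhdsWithin_iff.mp h
  refine ⟨max ε⁻¹ 1, by positivity, fun t ht => ?_⟩
  have ht1 : (1:ℝ) < ‖t‖ := lt_of_le_of_lt (le_max_right _ _) ht
  have htpos : (0:ℝ) < ‖t‖ := by linarith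
  have htne : t ≠ 0 := by
    intro h0; rw [h0, norm_zero] at ht1; linarith
  refine hball ⟨?_, ?_⟩
  · rw [Metric.mem_ball, dist_zero_right, norm_inv]
    have hεt : ε⁻¹ < ‖t‖ := lt_of_le_of_lt (le_max_left _ _) ht
    exact (inv_lt_comm₀ hε htpos).mp hεt
  · exact Set.mem_compl_singleton_iff.mpr (inv_ne_zero htne)

private lemma degInf_eq_bot_or_coe {φ : ℂ → ℂ} (h : MeroInf φ) :
    (degInf φ = ⊥ ∧ (meromorphicOrderAt (fun t => φ t⁻¹) 0) = ⊤) ∨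
      ∃ m : ℤ, (meromorphicOrderAt (fun t => φ t⁻¹) 0) = (m : WithTop ℤ) ∧ degInf φ = ((((-m : ℤ) : ℝ)) : EReal) := by
  cases hm : (meromorphicOrderAt (fun t => φ t⁻¹) 0) with
  | top => exact Or.inl ⟨by rw [degInf, dif_pos h, hm]; rfl, rfl⟩
  | coe m => exact Or.inr ⟨m, rfl, by rw [degInf, dif_pos h, hm]; rfl⟩

private lemma degInf_bot_zero {φ : ℂ → ℂ} (h : MeroInf φ) (h0 : degInf φ = ⊥) :
    ∃ R : ℝ, 0 < R ∧ ∀ t : ℂ, R < ‖t‖ → φ t = 0 := by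
  rcases degInf_eq_bot_or_coe h with ⟨_, htop⟩ | ⟨m, hm, hcoe⟩
  · obtain ⟨R, hR, hP⟩ := ev_inv (meromorphicOrderAt_eq_top_iff.mp htop)
    exact ⟨R, hR, fun t ht => by simpa using hP t ht⟩
  · rw [hcoe] at h0; exact absurd h0 (by simp)

private lemma degInf_coe_bound {φ : ℂ → ℂ} (h : MeroInf φ) {a : ℝ}
    (ha : degInf φ = (a : EReal)) :
    ∃ c₁ c₂ R : ℝ, 0 < c₁ ∧ 0 < c₂ ∧ 0 < R ∧ ∀ t : ℂ, R < ‖t‖ →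
      c₁ * ‖t‖ ^ a ≤ ‖φ t‖ ∧ ‖φ t‖ ≤ c₂ * ‖t‖ ^ a := by
  rcases degInf_eq_bot_or_coe h with ⟨hbot, _⟩ | ⟨m, hm, hcoe⟩
  · rw [hbot] at ha; exact absurd ha.symm (by simp)
  · have ham : a = ((-m : ℤ) : ℝ) := by
      rw [hcoe] at ha; exact_mod_cast ha.symm
    obtain ⟨g, hg_an, hg_ne, hg_eq⟩ := (meromorphicOrderAt_eq_int_iff (n := m) h).mp hm
    have hg0 : (0:ℝ) < ‖g 0‖ := norm_pos_iff.mpr hg_ne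
    have h2 : ∀ᶠ s in 𝓝 (0:ℂ), g s ∈ Metric.ball (g 0) (‖g 0‖ / 2) :=
      hg_an.continuousAt (Metric.ball_mem_nhds _ (by positivity))
    have h3 : ∀ᶠ s in 𝓝[≠] (0:ℂ), s ≠ 0 := by
      filter_upwards [self_mem_nhdsWithin] with s hs
      exact Set.mem_compl_singleton_iff.mp hs
    have hkey : ∀ᶠ s in 𝓝[≠] (0:ℂ),
        (‖g 0‖/2) * ‖s⁻¹‖ ^ a ≤ ‖φ s⁻¹‖ ∧ ‖φ s⁻¹‖ ≤ (2 * ‖g 0‖) * ‖s⁻¹‖ ^ a := by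
      filter_upwards [hg_eq, h2.filter_mono nhdsWithin_le_nhds, h3] with s heq hgb hs
      have hsn : (0:ℝ) < ‖s‖ := norm_pos_iff.mpr hs
      have hinv : ‖s⁻¹‖ ^ a = ‖s‖ ^ (m : ℤ) := by
        rw [ham, norm_inv]
        rw [show (((-m:ℤ)):ℝ) = -(m:ℝ) by push_cast; ring]
        rw [Real.rpow_neg (inv_nonneg.mpr hsn.le), Real.inv_rpow hsn.le, inv_inv,
          Real.rpow_intCast]
      have hz : (0:ℝ) < ‖s‖ ^ (m:ℤ) := zpow_pos hsn m
      rw [Metric.mem_ball, dist_eq_norm] at hgb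
      have habs : |‖g s‖ - ‖g 0‖| ≤ ‖g s - g 0‖ := abs_norm_sub_norm_le _ _
      rw [abs_le] at habs
      rw [hinv, heq, sub_zero, norm_smul, norm_zpow]
      constructor
      · nlinarith [habs.1]
      · nlinarith [habs.2]
    obtain ⟨R, hR, hP⟩ := ev_inv hkey
    refine ⟨‖g 0‖/2, 2 * ‖g 0‖, R, by positivity, by positivity, hR, fun t ht => ?_⟩
    simpa using hP t ht

private lemma meroPoly {n : ℕ} {Ψ : ℂ → Fin n → ℂ} (h : IsMeroCurve Ψ)
    (P : MvPolynomial (Fin n) ℂ) : MeroInf fun t => MvPolynomial.eval (Ψ t) P := by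
  induction P using MvPolynomial.induction_on with
  | C a =>
      show MeromorphicAt _ 0
      simpa using (analyticAt_const (v := a) (x := (0:ℂ))).meromorphicAt
  | add p q hp hq =>
      have := MeromorphicAt.add hp hq
      show MeromorphicAt _ 0
      simpa [MvPolynomial.eval_add, Pi.add_def] using this
  | mul_X p i hp =>
      have := MeromorphicAt.mul hp (h i)
      show MeromorphicAt _ 0
      simpa [MvPolynomial.eval_mul, MvPolynomial.eval_X, Pi.mul_def] using this

private lemma no_dominate {c C p q R : ℝ} (hc : 0 < c) (hpq : q < p)
    (h : ∀ t : ℂ, R < ‖t‖ → c * ‖t‖ ^ p ≤ C * ‖t‖ ^ q) : False := by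
  have h1 : Tendsto (fun x : ℝ => c * x ^ (p - q)) atTop atTop :=
    (tendsto_rpow_atTop (by linarith)).const_mul_atTop hc
  obtain ⟨x, hx2, hx3⟩ := ((h1.eventually_gt_atTop C).and (eventually_gt_atTop (max R 1))).exists
  have hxR : R < x := lt_of_le_of_lt (le_max_left _ _) hx3
  have hx1 : (1:ℝ) < x := lt_of_le_of_lt (le_max_right _ _) hx3
  have hx0 : (0:ℝ) < x := by linarith
  have hnt : ‖(x:ℂ)‖ = x := by rw [Complex.norm_real, Real.norm_eq_abs, abs_of_pos hx0]
  have hle := h (x:ℂ) (by rw [hnt]; exact hxR)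
  rw [hnt] at hle
  have hq : (0:ℝ) < x ^ q := Real.rpow_pos_of_pos hx0 q
  have key : c * x ^ (p - q) * x ^ q = c * x ^ p := by
    rw [mul_assoc, ← Real.rpow_add hx0]; ring_nf
  nlinarith

private lemma curve_upper {n : ℕ} {Ψ : ℂ → Fin n → ℂ} (hm : IsMeroCurve Ψ) {d : ℝ}
    (hd : degCurve Ψ ≤ (d : EReal)) :
    ∃ c R : ℝ, 0 < c ∧ 1 ≤ R ∧ ∀ t : ℂ, R < ‖t‖ → ‖Ψ t‖ ≤ c * ‖t‖ ^ d := by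
  have hcomp : ∀ i, ∃ cR : ℝ × ℝ, 0 < cR.1 ∧ 0 < cR.2 ∧
      ∀ t : ℂ, cR.2 < ‖t‖ → 1 < ‖t‖ → ‖Ψ t i‖ ≤ cR.1 * ‖t‖ ^ d := by
    intro i
    have hi : degInf (fun t => Ψ t i) ≤ (d:EReal) :=
      le_trans (le_iSup (fun i => degInf fun t => Ψ t i) i) hd
    rcases degInf_eq_bot_or_coe (hm i) with ⟨hbot, _⟩ | ⟨m, _, hcoe⟩
    · obtain ⟨R, hR, hz⟩ := degInf_bot_zero (hm i) hbot
      refine ⟨(1, R), one_pos, hR, fun t ht h1 => ?_⟩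
      rw [hz t ht, norm_zero]
      positivity
    · obtain ⟨c₁, c₂, R, hc₁, hc₂, hR, hb⟩ := degInf_coe_bound (hm i) hcoe
      have ham : ((-m:ℤ):ℝ) ≤ d := by rw [hcoe] at hi; exact_mod_cast hi
      exact ⟨(c₂, R), hc₂, hR, fun t ht h1 => le_trans (hb t ht).2
        (mul_le_mul_of_nonneg_left (Real.rpow_le_rpow_of_exponent_le h1.le ham) hc₂.le)⟩
  choose cR hc hR hb using hcomp
  have hsc : (0:ℝ) ≤ ∑ j, (cR j).1 := Finset.sum_nonneg fun j _ => (hc j).le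
  have hsR0 : (0:ℝ) ≤ ∑ j, (cR j).2 := Finset.sum_nonneg fun j _ => (hR j).le
  refine ⟨1 + ∑ i, (cR i).1, 1 + ∑ i, (cR i).2, by linarith, by linarith, fun t ht => ?_⟩
  have hsumR : ∀ i, (cR i).2 ≤ ∑ j, (cR j).2 := fun i =>
    Finset.single_le_sum (fun j _ => (hR j).le) (Finset.mem_univ i)
  have hsumc : ∀ i, (cR i).1 ≤ ∑ j, (cR j).1 := fun i =>
    Finset.single_le_sum (fun j _ => (hc j).le) (Finset.mem_univ i)
  have hsR : (0:ℝ) ≤ ∑ j, (cR j).2 := Finset.sum_nonneg fun j _ => (hR j).le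
  have h1t : (1:ℝ) < ‖t‖ := by linarith
  have hrp : (0:ℝ) ≤ ‖t‖ ^ d := Real.rpow_nonneg (by linarith) d
  rw [pi_norm_le_iff_of_nonneg (mul_nonneg (by linarith) hrp)]
  intro i
  calc ‖Ψ t i‖ ≤ (cR i).1 * ‖t‖ ^ d := hb i t (by linarith [hsumR i]) h1t
    _ ≤ (1 + ∑ j, (cR j).1) * ‖t‖ ^ d := by
        apply mul_le_mul_of_nonneg_right _ hrp
        linarith [hsumc i]

private lemma curve_bot_zero {n : ℕ} {Ψ : ℂ → Fin n → ℂ} (hm : IsMeroCurve Ψ)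
    (h : degCurve Ψ = ⊥) :
    ∃ R : ℝ, 0 < R ∧ ∀ t : ℂ, R < ‖t‖ → ‖Ψ t‖ = 0 := by
  have hcomp : ∀ i, ∃ R : ℝ, 0 < R ∧ ∀ t : ℂ, R < ‖t‖ → Ψ t i = 0 := by
    intro i
    have hi : degInf (fun t => Ψ t i) ≤ (⊥ : EReal) :=
      h ▸ le_iSup (fun i => degInf fun t => Ψ t i) i
    exact degInf_bot_zero (hm i) (le_bot_iff.mp hi)
  choose R hR hz using hcomp
  have hs0 : (0:ℝ) ≤ ∑ j, R j := Finset.sum_nonneg fun j _ => (hR j).le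
  refine ⟨1 + ∑ i, R i, by linarith, fun t ht => ?_⟩
  have : Ψ t = 0 := by
    funext i
    exact hz i t (by
      have : R i ≤ ∑ j, R j := Finset.single_le_sum (fun j _ => (hR j).le) (Finset.mem_univ i)
      linarith)
  rw [this, norm_zero]

private lemma degCurve_cases {n : ℕ} [NeZero n] {Ψ : ℂ → Fin n → ℂ} (hm : IsMeroCurve Ψ) :
    degCurve Ψ = ⊥ ∨ ∃ (d : ℝ) (i₀ : Fin n), degCurve Ψ = (d:EReal) ∧
      degInf (fun t => Ψ t i₀) = (d:EReal) := by
  obtain ⟨i₀, hmax⟩ := Finite.exists_max (fun i => degInf fun t => Ψ t i)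
  have heq : degCurve Ψ = degInf (fun t => Ψ t i₀) :=
    le_antisymm (iSup_le hmax) (le_iSup (fun i => degInf fun t => Ψ t i) i₀)
  rcases degInf_eq_bot_or_coe (hm i₀) with ⟨hbot, _⟩ | ⟨m, _, hc⟩
  · exact Or.inl (heq.trans hbot)
  · exact Or.inr ⟨_, i₀, heq.trans hc, hc⟩

private lemma fiber_small {φ : ℂ → ℂ} (h : MeroInf φ) (hneg : degInf φ < 0)
    (ε : ℝ) (hε : 0 < ε) : ∃ R : ℝ, 0 < R ∧ ∀ t : ℂ, R < ‖t‖ → ‖φ t‖ < ε := by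
  rcases degInf_eq_bot_or_coe h with ⟨hbot, _⟩ | ⟨m, _, hc⟩
  · obtain ⟨R, hR, hz⟩ := degInf_bot_zero h hbot
    exact ⟨R, hR, fun t ht => by rw [hz t ht, norm_zero]; exact hε⟩
  · obtain ⟨c₁, c₂, R, hc₁, hc₂, hR, hb⟩ := degInf_coe_bound h hc
    set a : ℝ := ((-m:ℤ):ℝ) with ha
    have haneg : a < 0 := by
      rw [hc] at hneg; exact_mod_cast hneg
    have htend : Tendsto (fun x:ℝ => c₂ * x ^ a) atTop (𝓝 0) := by
      have := (tendsto_rpow_neg_atTop (y := -a) (by linarith)).const_mul c₂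
      simpa using this
    obtain ⟨X, hX⟩ := (htend.eventually (gt_mem_nhds hε)).exists_forall_of_atTop
    refine ⟨max R (max X 1), by positivity, fun t ht => ?_⟩
    have h1 : R < ‖t‖ := lt_of_le_of_lt (le_max_left _ _) ht
    have h2 : X ≤ ‖t‖ := le_of_lt (lt_of_le_of_lt ((le_max_left X 1).trans (le_max_right R _)) ht)
    exact lt_of_le_of_lt (hb t h1).2 (hX ‖t‖ h2)

private lemma norm_large {n : ℕ} {Ψ : ℂ → Fin n → ℂ} {c₁ d R₁ : ℝ} {i₀ : Fin n}
    (hc₁ : 0 < c₁) (hd : 0 < d)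
    (hlow : ∀ t : ℂ, R₁ < ‖t‖ → c₁ * ‖t‖ ^ d ≤ ‖Ψ t i₀‖) (M : ℝ) :
    ∃ R : ℝ, 0 < R ∧ ∀ t : ℂ, R < ‖t‖ → M < ‖Ψ t‖ := by
  have htend : Tendsto (fun x:ℝ => c₁ * x ^ d) atTop atTop :=
    (tendsto_rpow_atTop hd).const_mul_atTop hc₁
  obtain ⟨X, hX⟩ := (htend.eventually_gt_atTop M).exists_forall_of_atTop
  refine ⟨max R₁ (max X 1), by positivity, fun t ht => ?_⟩
  have h1 : R₁ < ‖t‖ := lt_of_le_of_lt (le_max_left _ _) ht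
  have h2 : X ≤ ‖t‖ := le_of_lt (lt_of_le_of_lt ((le_max_left X 1).trans (le_max_right R₁ _)) ht)
  exact lt_of_lt_of_le (lt_of_lt_of_le (hX ‖t‖ h2) (hlow t h1))
    (norm_le_pi_norm (Ψ t) i₀)

private lemma exists_big (R : ℝ) : ∃ t : ℂ, R < ‖t‖ := by
  refine ⟨((max R 0) + 1 : ℝ), ?_⟩
  rw [Complex.norm_real, Real.norm_eq_abs, abs_of_pos (by positivity)]
  have := le_max_left R 0
  linarith

private lemma mero_fib {n : ℕ} {Ψ : ℂ → Fin n → ℂ} (hΨ : IsMeroCurve Ψ)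
    (f : MvPolynomial (Fin n) ℂ) (lam0 : ℂ) :
    MeroInf (fun t => mval f (Ψ t) - lam0) := by
  show MeromorphicAt _ 0
  exact (meroPoly hΨ f).sub ((analyticAt_const (v := lam0) (x := (0:ℂ))).meromorphicAt)

private lemma ratio_ge {n : ℕ} [NeZero n] {f : MvPolynomial (Fin n) ℂ} {lam0 : ℂ}
    {η δ R₀ : ℝ} (hη : 0 < η) (hδ : 0 < δ)
    (HM : ∀ p : Fin n → ℂ, R₀ < ‖p‖ → ‖mval f p - lam0‖ < δ → η < ‖p‖ * ‖mgrad f p‖)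
    {Ψ : ℂ → Fin n → ℂ} (hΨ : IsMeroCurve Ψ) (hpos : 0 < degCurve Ψ)
    (hfib : degInf (fun t => mval f (Ψ t) - lam0) < 0) :
    (-1 : EReal) ≤ degCurve (fun t => mgrad f (Ψ t)) / degCurve Ψ := by
  -- structure of degCurve Ψ
  rcases degCurve_cases hΨ with hbot | ⟨e, i₀, he, hei⟩
  · rw [hbot] at hpos; exact absurd hpos (by simp)
  have hepos : 0 < e := by rw [he] at hpos; exact_mod_cast hpos
  obtain ⟨c₁, c₂, R₁, hc₁, hc₂, hR₁, hlow⟩ := degInf_coe_bound (hΨ i₀) hei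
  obtain ⟨Rn, hRn, hbig⟩ := norm_large hc₁ hepos (fun t ht => (hlow t ht).1) R₀
  obtain ⟨Rf, hRf, hfsmall⟩ := fiber_small (mero_fib hΨ f lam0) hfib δ hδ
  have hgradMero : IsMeroCurve (fun t => mgrad f (Ψ t)) := fun i => meroPoly hΨ _
  rcases degCurve_cases hgradMero with hgbot | ⟨g, j₀, hg, _⟩
  · exfalso
    obtain ⟨Rz, hRz, hzero⟩ := curve_bot_zero hgradMero hgbot
    obtain ⟨t, ht⟩ := exists_big (max Rn (max Rf Rz))
    have h1 : Rn < ‖t‖ := lt_of_le_of_lt (le_max_left _ _) ht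
    have h2 : Rf < ‖t‖ := lt_of_le_of_lt ((le_max_left Rf Rz).trans (le_max_right Rn _)) ht
    have h3 : Rz < ‖t‖ := lt_of_le_of_lt ((le_max_right Rf Rz).trans (le_max_right Rn _)) ht
    have := HM (Ψ t) (hbig t h1) (hfsmall t h2)
    rw [hzero t h3, mul_zero] at this
    linarith
  · rw [hg, he, ← EReal.coe_div]
    -- reduce to real inequality
    have hge : -e ≤ g := by
      by_contra hlt
      push_neg at hlt
      obtain ⟨c₃, R₂, hc₃, hR₂, hup⟩ := curve_upper hΨ (le_of_eq he)
      obtain ⟨c₄, R₃, hc₄, hR₃, hgup⟩ := curve_upper hgradMero (le_of_eq hg)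
      refine no_dominate (c := η) (C := c₃ * c₄) (p := 0) (q := e + g)
        (R := max (max Rn Rf) (max R₂ R₃)) hη (by linarith) (fun t ht => ?_)
      have h1 : Rn < ‖t‖ := lt_of_le_of_lt ((le_max_left Rn Rf).trans (le_max_left _ _)) ht
      have h2 : Rf < ‖t‖ := lt_of_le_of_lt ((le_max_right Rn Rf).trans (le_max_left _ _)) ht
      have h3 : R₂ < ‖t‖ := lt_of_le_of_lt ((le_max_left R₂ R₃).trans (le_max_right _ _)) ht
      have h4 : R₃ < ‖t‖ := lt_of_le_of_lt ((le_max_right R₂ R₃).trans (le_max_right _ _)) ht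
      have htpos : (0:ℝ) < ‖t‖ := lt_of_le_of_lt (by positivity) ht
      have hMal := HM (Ψ t) (hbig t h1) (hfsmall t h2)
      have hprod : ‖Ψ t‖ * ‖mgrad f (Ψ t)‖ ≤ (c₃ * c₄) * ‖t‖ ^ (e + g) := by
        rw [Real.rpow_add htpos]
        calc ‖Ψ t‖ * ‖mgrad f (Ψ t)‖ ≤ (c₃ * ‖t‖ ^ e) * (c₄ * ‖t‖ ^ g) :=
              mul_le_mul (hup t h3) (hgup t h4) (norm_nonneg _)
                (by positivity)
          _ = c₃ * c₄ * (‖t‖ ^ e * ‖t‖ ^ g) := by ring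
      rw [Real.rpow_zero, mul_one]
      exact hMal.le.trans hprod
    have hreal : (-1 : ℝ) ≤ g / e := by rw [le_div_iff₀ hepos]; linarith
    have : ((-1:ℝ) : EReal) ≤ ((g/e : ℝ) : EReal) := EReal.coe_le_coe_iff.mpr hreal
    simpa using this

private lemma nu_le {n : ℕ} [NeZero n] {f : MvPolynomial (Fin n) ℂ} {lam0 : ℂ}
    {Φ : ℂ → Fin n → ℂ} (hΦ : IsMeroCurve Φ) (hpos : 0 < degCurve Φ)
    (hfib : degInf (fun t => mval f (Φ t) - lam0) < 0)
    (hgrad : degCurve (fun t => mgrad f (Φ t)) = -degCurve Φ)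
    {δ' : ℝ} (hδ' : 0 < δ') {ν A B : ℝ} (hA : 0 < A) (hB : 0 < B)
    (hb : ∀ z ∈ mval f ⁻¹' Metric.ball lam0 δ', B < ‖z‖ → A * Real.rpow ‖z‖ ν ≤ ‖mgrad f z‖) :
    ν ≤ -1 := by
  by_contra hν
  push_neg at hν
  rcases degCurve_cases hΦ with hbot | ⟨d, i₀, hd, hdi⟩
  · rw [hbot] at hpos; exact absurd hpos (by simp)
  have hdpos : 0 < d := by rw [hd] at hpos; exact_mod_cast hpos
  obtain ⟨c₁, c₂x, R₁, hc₁, hc₂x, hR₁, hlow⟩ := degInf_coe_bound (hΦ i₀) hdi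
  obtain ⟨Rn, hRn, hbig⟩ := norm_large hc₁ hdpos (fun t ht => (hlow t ht).1) B
  obtain ⟨Rf, hRf, hfsmall⟩ := fiber_small (mero_fib hΦ f lam0) hfib δ' hδ'
  obtain ⟨c₂, R₂, hc₂, hR₂, hup⟩ := curve_upper hΦ (le_of_eq hd)
  have hgradMero : IsMeroCurve (fun t => mgrad f (Φ t)) := fun i => meroPoly hΦ _
  have hgle : degCurve (fun t => mgrad f (Φ t)) ≤ (((-d):ℝ) : EReal) := by
    rw [hgrad, hd]; exact le_of_eq (by norm_cast)
  obtain ⟨c₄, R₃, hc₄, hR₃, hgup⟩ := curve_upper hgradMero hgle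
  set Rbig := max (max Rn Rf) (max (max R₁ R₂) R₃) with hRbig
  have hbounds : ∀ t : ℂ, Rbig < ‖t‖ →
      Rn < ‖t‖ ∧ Rf < ‖t‖ ∧ R₁ < ‖t‖ ∧ R₂ < ‖t‖ ∧ R₃ < ‖t‖ := by
    intro t ht
    refine ⟨lt_of_le_of_lt ?_ ht, lt_of_le_of_lt ?_ ht, lt_of_le_of_lt ?_ ht,
      lt_of_le_of_lt ?_ ht, lt_of_le_of_lt ?_ ht⟩
    · exact (le_max_left Rn Rf).trans (le_max_left _ _)
    · exact (le_max_right Rn Rf).trans (le_max_left _ _)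
    · exact ((le_max_left R₁ R₂).trans (le_max_left _ R₃)).trans (le_max_right _ _)
    · exact ((le_max_right R₁ R₂).trans (le_max_left _ R₃)).trans (le_max_right _ _)
    · exact (le_max_right (max R₁ R₂) R₃).trans (le_max_right _ _)
  have hkey : ∃ c₅ : ℝ, 0 < c₅ ∧ ∀ t : ℂ, Rbig < ‖t‖ →
      c₅ * ‖t‖ ^ (d * ν) ≤ ‖Φ t‖ ^ ν := by
    rcases le_or_gt 0 ν with hν0 | hν0
    · refine ⟨c₁ ^ ν, Real.rpow_pos_of_pos hc₁ ν, fun t ht => ?_⟩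
      obtain ⟨h1, h2, h3, h4, h5⟩ := hbounds t ht
      have hl : c₁ * ‖t‖ ^ d ≤ ‖Φ t‖ := (hlow t h3).1.trans (norm_le_pi_norm (Φ t) i₀)
      have := Real.rpow_le_rpow (by positivity) hl hν0
      rwa [Real.mul_rpow hc₁.le (Real.rpow_nonneg (norm_nonneg t) d),
        ← Real.rpow_mul (norm_nonneg t)] at this
    · refine ⟨c₂ ^ ν, Real.rpow_pos_of_pos hc₂ ν, fun t ht => ?_⟩
      obtain ⟨h1, h2, h3, h4, h5⟩ := hbounds t ht
      have hΦ0 : (0:ℝ) < ‖Φ t‖ := lt_trans hB (hbig t h1)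
      have := Real.rpow_le_rpow_of_nonpos hΦ0 (hup t h4) hν0.le
      rwa [Real.mul_rpow hc₂.le (Real.rpow_nonneg (norm_nonneg t) d),
        ← Real.rpow_mul (norm_nonneg t)] at this
  obtain ⟨c₅, hc₅, hlo⟩ := hkey
  refine no_dominate (c := A * c₅) (C := c₄) (p := d * ν) (q := -d) (R := Rbig)
    (by positivity) (by nlinarith) (fun t ht => ?_)
  obtain ⟨h1, h2, h3, h4, h5⟩ := hbounds t ht
  have hmem : Φ t ∈ mval f ⁻¹' Metric.ball lam0 δ' := by
    rw [Set.mem_preimage, Metric.mem_ball, dist_eq_norm]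
    exact hfsmall t h2
  have hAb := hb (Φ t) hmem (hbig t h1)
  calc A * c₅ * ‖t‖ ^ (d * ν) = A * (c₅ * ‖t‖ ^ (d * ν)) := by ring
    _ ≤ A * (‖Φ t‖ ^ ν) := by
        exact mul_le_mul_of_nonneg_left (hlo t ht) hA.le
    _ ≤ ‖mgrad f (Φ t)‖ := hAb
    _ ≤ c₄ * ‖t‖ ^ (-d) := hgup t h5


end Helpers

/-- Proposition 6.2.1. -/
theorem stmt18 (n : ℕ) (hn : 2 ≤ n) (f : MvPolynomial (Fin n) ℂ)
    (hf : 0 < f.totalDegree) (lam0 : ℂ)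
    (h1 : lam0 ∉ Kinf f)
    (h2 : ∃ Φ : ℂ → Fin n → ℂ, IsMeroCurve Φ ∧ 0 < degCurve Φ ∧
      degInf (fun t => mval f (Φ t) - lam0) < 0 ∧
      degCurve (fun t => mgrad f (Φ t)) = -degCurve Φ) :
    lojFiber f lam0 = -1 ∧ lojTilde f lam0 = -1 := by
  haveI : NeZero n := ⟨by omega⟩
  obtain ⟨Φ, hΦ, hΦpos, hΦfib, hΦgrad⟩ := h2
  have h1' : ∃ η δ R : ℝ, 0 < η ∧ 0 < δ ∧ 0 < R ∧
      ∀ p : Fin n → ℂ, R < ‖p‖ → ‖mval f p - lam0‖ < δ → η < ‖p‖ * ‖mgrad f p‖ := by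
    simpa [Kinf, Set.mem_setOf_eq, not_not] using h1
  obtain ⟨η, δ, R₀, hη, hδ, hR₀, HM⟩ := h1'
  constructor
  · apply le_antisymm
    · apply sInf_le
      refine ⟨Φ, hΦ, hΦpos, hΦfib, ?_⟩
      rcases degCurve_cases hΦ with hbot | ⟨d, i₀, hd, _⟩
      · rw [hbot] at hΦpos; exact absurd hΦpos (by simp)
      have hdpos : 0 < d := by rw [hd] at hΦpos; exact_mod_cast hΦpos
      have : degCurve (fun t => mgrad f (Φ t)) / degCurve Φ = ((-1:ℝ):EReal) := by
        rw [hΦgrad, hd, show (-(d:EReal)) = (((-d):ℝ):EReal) from by norm_cast,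
          ← EReal.coe_div, neg_div, div_self (ne_of_gt hdpos)]
      rw [this]; norm_num
    · refine le_sInf fun r hr => ?_
      obtain ⟨Ψ, hΨ, hpos, hfib, rfl⟩ := hr
      exact ratio_ge hη hδ HM hΨ hpos hfib
  · apply le_antisymm
    · refine iSup_le fun δ' => sSup_le ?_
      rintro x ⟨ν, hν, rfl⟩
      obtain ⟨A, B, hA, hB, hbound⟩ := hν
      have hle := nu_le hΦ hΦpos hΦfib hΦgrad δ'.2 hA hB hbound
      rw [show ((-1:EReal)) = (((-1:ℝ)):EReal) from by norm_num]
      exact EReal.coe_le_coe_iff.mpr hle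
    · have hmem : ((-1:ℝ) : EReal) ∈ Real.toEReal '' {ν : ℝ | ∃ A B : ℝ, 0 < A ∧ 0 < B ∧
          ∀ z ∈ (mval f ⁻¹' Metric.ball lam0 δ), B < ‖z‖ →
            A * Real.rpow ‖z‖ ν ≤ ‖mgrad f z‖} := by
        refine ⟨-1, ⟨η, max R₀ 1, hη, by positivity, fun z hz hBz => ?_⟩, rfl⟩
        have hz' : ‖mval f z - lam0‖ < δ := by
          rw [Set.mem_preimage, Metric.mem_ball, dist_eq_norm] at hz; exact hz
        have h0 : (0:ℝ) < ‖z‖ := lt_of_le_of_lt (le_max_of_le_right zero_le_one) hBz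
        have hM := HM z (lt_of_le_of_lt (le_max_left _ _) hBz) hz'
        have hr : Real.rpow ‖z‖ (-1) = ‖z‖⁻¹ := Real.rpow_neg_one ‖z‖
        rw [hr, mul_inv_le_iff₀ h0]
        exact le_of_lt (by rwa [mul_comm] at hM)
      calc (-1:EReal) = ((-1:ℝ):EReal) := by norm_num
        _ ≤ lojInfOn (mgrad f) (mval f ⁻¹' Metric.ball lam0 δ) := le_sSup hmem
        _ ≤ lojTilde f lam0 :=
            le_iSup (fun δ'' : {d : ℝ // 0 < d} =>
              lojInfOn (mgrad f) (mval f ⁻¹' Metric.ball lam0 δ''.1)) ⟨δ, hδ⟩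


end
end
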